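/- arXiv:1711.05029 — 4 statements merged into one kernel-verified Lean document; each statement's English description precedes it below -/
import Mathlib

section
/- Assume the trace class condition ∑_{n≥0}(|a_n - 1/2| + |b_n|) < ∞. Let ζ ∈ ℂ with 0 < |ζ| ≤ 1, ζ ∉ {1, -1}, set z = (ζ + ζ⁻¹)/2, and let f = (f_n)_{n≥-1} be a solution of the Jacobi equation at z with f_n ζ^{-n} → 1. Then the series ∑_{n≥0} ζ^{n+1} (VP(z))_n converges absolutely and ζ f_{-1} = 1 - 2 ∑_{n=0}^{∞} ζ^{n+1} (VP(z))_n, where (VP(z))_n = (a_{n-1} - 1/2) P_{n-1}(z) + b_n P_n(z) + (a_n - 1/2) P_{n+1}(z) with a_{-1} = 1/2 and P_{-1}(z) = 0. -/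
open Filter Finset MeasureTheory

noncomputable section

/-- Extended coefficient sequence with `a₋₁ = 1/2`. -/
def aext (a : ℕ → ℝ) : ℤ → ℝ := fun k => if k < 0 then 1/2 else a k.toNat

/-- `u : ℤ → ℂ` (restricted to indices `n ≥ -1`) solves the Jacobi equation
`a_{n-1} u_{n-1} + b_n u_n + a_n u_{n+1} = z u_n` for all `n ≥ 0`, with `a_{-1} = 1/2`. -/
def IsJacobiSol (a b : ℕ → ℝ) (z : ℂ) (u : ℤ → ℂ) : Prop :=
  ∀ n : ℕ, (aext a ((n : ℤ) - 1) : ℂ) * u ((n : ℤ) - 1) + (b n : ℂ) * u (n : ℤ)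
      + (a n : ℂ) * u ((n : ℤ) + 1) = z * u (n : ℤ)

/-- The perturbation `V = H - H₀` applied to a sequence:
`(Vf)_m = (a_{m-1} - 1/2) f_{m-1} + b_m f_m + (a_m - 1/2) f_{m+1}` with `a_{-1} = 1/2`. -/
def jV (a b : ℕ → ℝ) (f : ℤ → ℂ) (m : ℕ) : ℂ :=
  ((aext a ((m : ℤ) - 1) - 1/2 : ℝ) : ℂ) * f ((m : ℤ) - 1) + (b m : ℂ) * f (m : ℤ)
    + ((a m - 1/2 : ℝ) : ℂ) * f ((m : ℤ) + 1)

lemma aext_neg_one (a : ℕ → ℝ) : aext a (-1) = 1/2 := by simp [aext]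

lemma aext_natCast (a : ℕ → ℝ) (n : ℕ) : aext a (n : ℤ) = a n := by simp [aext]

/-- free solution with P-initial data -/
def Ffree (ζ : ℂ) (n : ℕ) : ℂ := (ζ^(n+1) - ζ⁻¹^(n+1))/(ζ - ζ⁻¹)

/-- Green kernel -/
def gker (ζ : ℂ) (j : ℕ) : ℂ := 2*(ζ^j - ζ⁻¹^j)/(ζ - ζ⁻¹)

def Rfun (a b : ℕ → ℝ) (ζ : ℂ) (P : ℤ → ℂ) (k : ℕ) : ℂ :=
  Ffree ζ k - ∑ m ∈ Finset.range k, gker ζ (k-m) * jV a b P m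

section rec
variable {ζ z : ℂ}

lemma zeta_sub_inv_ne (hζ : ζ ≠ 0) (hζsq : ζ^2 - 1 ≠ 0) : ζ - ζ⁻¹ ≠ 0 := by
  intro h
  apply hζsq
  have : ζ * (ζ - ζ⁻¹) = ζ^2 - 1 := by field_simp
  rw [h, mul_zero] at this
  exact this.symm

lemma Ffree_zero (hζ : ζ ≠ 0) (hζsq : ζ^2 - 1 ≠ 0) : Ffree ζ 0 = 1 := by
  unfold Ffree
  simp [div_self (zeta_sub_inv_ne hζ hζsq)]

lemma Ffree_one (hζ : ζ ≠ 0) (hζsq : ζ^2 - 1 ≠ 0) (hz : z = (ζ + ζ⁻¹) / 2) : Ffree ζ 1 = 2 * z := by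
  unfold Ffree
  rw [hz, div_eq_iff (zeta_sub_inv_ne hζ hζsq)]
  ring

lemma gker_zero : gker ζ 0 = 0 := by simp [gker]

lemma gker_one (hζ : ζ ≠ 0) (hζsq : ζ^2 - 1 ≠ 0) : gker ζ 1 = 2 := by
  unfold gker
  rw [pow_one, pow_one, div_eq_iff (zeta_sub_inv_ne hζ hζsq)]

lemma Ffree_rec (hζ : ζ ≠ 0) (hζsq : ζ^2 - 1 ≠ 0) (hz : z = (ζ + ζ⁻¹) / 2) (n : ℕ) : Ffree ζ (n+2) = 2*z*Ffree ζ (n+1) - Ffree ζ n := by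
  unfold Ffree
  rw [hz]
  have hw : ζ * ζ⁻¹ = 1 := mul_inv_cancel₀ hζ
  linear_combination ((ζ⁻¹^(n+1) - ζ^(n+1)) * hw) / (ζ - ζ⁻¹)

lemma gker_rec (hζ : ζ ≠ 0) (hζsq : ζ^2 - 1 ≠ 0) (hz : z = (ζ + ζ⁻¹) / 2) (j : ℕ) : gker ζ (j+2) = 2*z*gker ζ (j+1) - gker ζ j := by
  unfold gker
  rw [hz]
  have hw : ζ * ζ⁻¹ = 1 := mul_inv_cancel₀ hζ
  linear_combination (2 * (ζ⁻¹^j - ζ^j) * hw) / (ζ - ζ⁻¹)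

end rec

section duhamel
variable {a b : ℕ → ℝ} {ζ z : ℂ} {P : ℤ → ℂ}

lemma Rfun_rec (hζ : ζ ≠ 0) (hζsq : ζ^2 - 1 ≠ 0) (hz : z = (ζ + ζ⁻¹) / 2) (n : ℕ) :
    Rfun a b ζ P (n+2) = 2*z*Rfun a b ζ P (n+1) - Rfun a b ζ P n - 2 * jV a b P (n+1) := by
  unfold Rfun
  rw [Finset.sum_range_succ]
  have e0 : n + 2 - (n+1) = 1 := by omega
  rw [e0, gker_one hζ hζsq]
  have h1 : ∀ m ∈ Finset.range (n+1), gker ζ (n+2-m) * jV a b P m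
      = 2*z*(gker ζ (n+1-m) * jV a b P m) - gker ζ (n-m) * jV a b P m := by
    intro m hm
    rw [Finset.mem_range, Nat.lt_succ_iff] at hm
    have e2 : n+2-m = (n-m)+2 := by omega
    have e1 : n+1-m = (n-m)+1 := by omega
    rw [e2, e1, gker_rec hζ hζsq hz]
    ring
  rw [Finset.sum_congr rfl h1, Finset.sum_sub_distrib, ← Finset.mul_sum]
  have h2 : ∑ m ∈ Finset.range (n+1), gker ζ (n-m) * jV a b P m
      = ∑ m ∈ Finset.range n, gker ζ (n-m) * jV a b P m := by
    rw [Finset.sum_range_succ, Nat.sub_self, gker_zero, zero_mul, add_zero]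
  rw [h2, Ffree_rec hζ hζsq hz]
  ring

lemma duhamel (hζ : ζ ≠ 0) (hζsq : ζ^2 - 1 ≠ 0) (hz : z = (ζ + ζ⁻¹) / 2)
    (hP : IsJacobiSol a b z P) (hPm : P (-1) = 0) (hP0 : P 0 = 1) :
    ∀ k : ℕ, P (k : ℤ) = Rfun a b ζ P k := by
  have key : ∀ n : ℕ, P (n : ℤ) = Rfun a b ζ P n ∧ P ((n+1 : ℕ) : ℤ) = Rfun a b ζ P (n+1) := by
    intro n
    induction n with
    | zero =>
      constructor
      · show P 0 = Rfun a b ζ P 0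
        rw [hP0]
        unfold Rfun
        rw [Ffree_zero hζ hζsq]
        simp
      · have h0 := hP 0
        unfold Rfun jV
        rw [Finset.sum_range_one, Ffree_one hζ hζsq hz]
        have e2 : 1 - 0 = 1 := by omega
        rw [e2, gker_one hζ hζsq]
        norm_num [aext_neg_one, hPm, hP0] at h0 ⊢
        linear_combination 2 * h0
    | succ n ih =>
      refine ⟨ih.2, ?_⟩
      have h := hP (n+1)
      have e1 : ((n+1:ℕ):ℤ) - 1 = (n:ℤ) := by push_cast; ring
      have e2 : ((n+1:ℕ):ℤ) + 1 = ((n+2:ℕ):ℤ) := by push_cast; ring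
      rw [e1, e2, aext_natCast] at h
      have hjv : jV a b P (n+1) = ((a n - 1/2 : ℝ):ℂ) * P (n:ℤ) + (b (n+1):ℂ) * P ((n+1:ℕ):ℤ)
          + ((a (n+1) - 1/2 : ℝ):ℂ) * P ((n+2:ℕ):ℤ) := by
        unfold jV
        rw [e1, e2, aext_natCast]
      rw [Rfun_rec hζ hζsq hz, ← ih.1, ← ih.2, hjv]
      push_cast at h ⊢
      rw [show ((n:ℤ)+1+1) = (n:ℤ)+2 by ring]
      linear_combination 2 * h
  exact fun k => (key k).1

end duhamel

section bounds
variable {ζ : ℂ}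

lemma pow_mul_Ffree (hζ : ζ ≠ 0) (hζsq : ζ^2 - 1 ≠ 0) (n : ℕ) :
    ζ^n * Ffree ζ n = (ζ^(2*n+2) - 1)/(ζ^2 - 1) := by
  unfold Ffree
  have hd := zeta_sub_inv_ne hζ hζsq
  have hw : ζ * ζ⁻¹ = 1 := mul_inv_cancel₀ hζ
  have hwn : ζ^n * ζ⁻¹^n = 1 := by rw [← mul_pow, hw, one_pow]
  rw [mul_div_assoc', div_eq_div_iff hd hζsq]
  linear_combination ζ⁻¹*(1-ζ^2)*hwn + ζ*(ζ^n*ζ^n - 1)*hw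

lemma norm_pow_mul_Ffree (hζ : ζ ≠ 0) (hζ1 : ‖ζ‖ ≤ 1) (hζsq : ζ^2 - 1 ≠ 0) (n : ℕ) :
    ‖ζ^n * Ffree ζ n‖ ≤ 2/‖ζ^2 - 1‖ := by
  rw [pow_mul_Ffree hζ hζsq, norm_div]
  have hpos : 0 < ‖ζ^2 - 1‖ := norm_pos_iff.mpr hζsq
  have h1 : ‖ζ^(2*n+2) - 1‖ ≤ 2 := by
    calc ‖ζ^(2*n+2) - 1‖ ≤ ‖ζ^(2*n+2)‖ + ‖(1:ℂ)‖ := norm_sub_le _ _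
      _ ≤ 1 + 1 := by
        rw [norm_one, norm_pow]
        gcongr
        exact pow_le_one₀ (norm_nonneg _) hζ1
      _ = 2 := by norm_num
  gcongr

lemma pow_mul_gker (hζ : ζ ≠ 0) (hζsq : ζ^2 - 1 ≠ 0) (m j : ℕ) :
    ζ^(m+j) * gker ζ j = 2*ζ^(m+1)*(ζ^(2*j) - 1)/(ζ^2 - 1) := by
  unfold gker
  have hd := zeta_sub_inv_ne hζ hζsq
  have hw : ζ * ζ⁻¹ = 1 := mul_inv_cancel₀ hζ
  have hwj : ζ^j * ζ⁻¹^j = 1 := by rw [← mul_pow, hw, one_pow]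
  rw [mul_div_assoc', div_eq_div_iff hd hζsq]
  linear_combination 2*ζ^m*(1-ζ^2)*hwj + 2*ζ^m*(ζ^(2*j)-1)*hw

lemma norm_pow_mul_gker (hζ : ζ ≠ 0) (hζ1 : ‖ζ‖ ≤ 1) (hζsq : ζ^2 - 1 ≠ 0)
    {m n : ℕ} (hmn : m ≤ n) :
    ‖ζ^n * gker ζ (n-m)‖ ≤ 4/‖ζ^2 - 1‖ * ‖ζ‖^(m+1) := by
  obtain ⟨j, rfl⟩ : ∃ j, n = m + j := ⟨n - m, by omega⟩
  have e : m + j - m = j := by omega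
  rw [e, pow_mul_gker hζ hζsq, norm_div, norm_mul, norm_mul]
  have hpos : 0 < ‖ζ^2 - 1‖ := norm_pos_iff.mpr hζsq
  have h1 : ‖ζ^(2*j) - 1‖ ≤ 2 := by
    calc ‖ζ^(2*j) - 1‖ ≤ ‖ζ^(2*j)‖ + ‖(1:ℂ)‖ := norm_sub_le _ _
      _ ≤ 1 + 1 := by
        rw [norm_one, norm_pow]
        gcongr
        exact pow_le_one₀ (norm_nonneg _) hζ1
      _ = 2 := by norm_num
  have h2 : ‖(2:ℂ)‖ = 2 := by norm_num
  rw [h2, norm_pow]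
  calc 2 * ‖ζ‖^(m+1) * ‖ζ^(2*j) - 1‖ / ‖ζ^2-1‖ ≤ 2 * ‖ζ‖^(m+1) * 2 / ‖ζ^2-1‖ := by
        gcongr
    _ = 4/‖ζ^2-1‖ * ‖ζ‖^(m+1) := by ring

end bounds

/-- Running maximum of a sequence. -/
def runMax (u : ℕ → ℝ) : ℕ → ℝ
  | 0 => u 0
  | (k+1) => max (runMax u k) (u (k+1))

lemma le_runMax (u : ℕ → ℝ) {j k : ℕ} (h : j ≤ k) : u j ≤ runMax u k := by
  induction k with
  | zero => simp_all [runMax]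
  | succ k ih =>
    rcases Nat.le_succ_iff_eq_or_le.mp h with h' | h'
    · subst h'; exact le_max_right _ _
    · exact le_trans (ih h') (le_max_left _ _)

lemma runMax_le (u : ℕ → ℝ) {k : ℕ} {C : ℝ} (h : ∀ j ≤ k, u j ≤ C) : runMax u k ≤ C := by
  induction k with
  | zero => exact h 0 le_rfl
  | succ k ih =>
    exact max_le (ih fun j hj => h j (Nat.le_succ_of_le hj)) (h (k+1) le_rfl)

lemma runMax_mono (u : ℕ → ℝ) {j k : ℕ} (h : j ≤ k) : runMax u j ≤ runMax u k := by
  apply runMax_le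
  intro i hi
  exact le_runMax u (le_trans hi h)

lemma gronwall {u w : ℕ → ℝ} (hu : ∀ n, 0 ≤ u n) (hw : ∀ n, 0 ≤ w n)
    {D₁ D₂ : ℝ} (hD₁ : 0 ≤ D₁) (hD₂ : 0 ≤ D₂) (hsum : Summable w)
    (hrec : ∀ n, u n ≤ D₁ + D₂ * ∑ m ∈ Finset.range n, w m * runMax u (m+1)) :
    ∃ C, 0 ≤ C ∧ ∀ n, u n ≤ C := by
  -- choose N₀ with small tail
  have hε : (0:ℝ) < 1/(4*(D₂+1)) := by positivity
  obtain ⟨N₀, hN₀⟩ : ∃ N₀, ∀ k, ∑ m ∈ Finset.Ico N₀ k, w m ≤ 1/(4*(D₂+1)) := by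
    have htail := hsum.hasSum.tendsto_sum_nat
    -- partial sums converge to tsum; monotone
    have : ∀ n, ∑ m ∈ Finset.range n, w m ≤ ∑' m, w m :=
      fun n => Summable.sum_le_tsum _ (fun i _ => hw i) hsum
    obtain ⟨N₀, hN⟩ := (Metric.tendsto_atTop.mp htail) (1/(4*(D₂+1))) hε
    refine ⟨N₀, fun k => ?_⟩
    rcases le_or_gt N₀ k with hk | hk
    · have h1 : ∑ m ∈ Finset.Ico N₀ k, w m = ∑ m ∈ Finset.range k, w m - ∑ m ∈ Finset.range N₀, w m := by
        rw [Finset.sum_Ico_eq_sub _ hk]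
      rw [h1]
      have h2 := hN N₀ le_rfl
      rw [Real.dist_eq, abs_sub_lt_iff] at h2
      have h3 := this k
      linarith [h2.2]
    · rw [Finset.Ico_eq_empty (by omega)]
      simpa using le_of_lt hε
  set ε := 1/(4*(D₂+1)) with hεdef
  set A := runMax u N₀ with hA
  have hA0 : 0 ≤ A := le_trans (hu 0) (le_runMax u (Nat.zero_le _))
  set K := D₁ + D₂ * ∑ m ∈ Finset.range N₀, w m * runMax u (m+1) + A with hK
  have hK0 : 0 ≤ K := by
    have : 0 ≤ ∑ m ∈ Finset.range N₀, w m * runMax u (m+1) := by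
      apply Finset.sum_nonneg
      intro m _
      exact mul_nonneg (hw m) (le_trans (hu 0) (le_runMax u (Nat.zero_le _)))
    positivity
  refine ⟨2*K, by positivity, ?_⟩
  intro k
  induction k using Nat.strong_induction_on with
  | _ k IH =>
  rcases le_or_gt k N₀ with hk | hk
  · calc u k ≤ A := le_runMax u hk
    _ ≤ K := by
      have : 0 ≤ D₁ + D₂ * ∑ m ∈ Finset.range N₀, w m * runMax u (m+1) := by
        have : 0 ≤ ∑ m ∈ Finset.range N₀, w m * runMax u (m+1) :=
          Finset.sum_nonneg fun m _ => mul_nonneg (hw m) (le_trans (hu 0) (le_runMax u (Nat.zero_le _)))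
        positivity
      linarith
    _ ≤ 2*K := by linarith
  · -- k > N₀, so k = (k-1)+1 with k-1 ≥ N₀
    obtain ⟨k', rfl⟩ : ∃ k', k = k' + 1 := ⟨k - 1, by omega⟩
    have hk' : N₀ ≤ k' := by omega
    rcases le_or_gt (u (k'+1)) (runMax u k') with hcase | hcase
    · calc u (k'+1) ≤ runMax u k' := hcase
        _ ≤ 2*K := runMax_le u fun j hj => IH j (by omega)
    · -- runMax u (k'+1) = u (k'+1)
      have hM : runMax u (k'+1) = u (k'+1) := by
        show max (runMax u k') (u (k'+1)) = u (k'+1)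
        exact max_eq_right (le_of_lt hcase)
      have hbound : ∀ m ∈ Finset.Ico N₀ (k'+1), w m * runMax u (m+1) ≤ w m * u (k'+1) := by
        intro m hm
        rw [Finset.mem_Ico] at hm
        apply mul_le_mul_of_nonneg_left _ (hw m)
        calc runMax u (m+1) ≤ runMax u (k'+1) := runMax_mono u (by omega)
          _ = u (k'+1) := hM
      have hsplit : ∑ m ∈ Finset.range (k'+1), w m * runMax u (m+1)
          = ∑ m ∈ Finset.range N₀, w m * runMax u (m+1) + ∑ m ∈ Finset.Ico N₀ (k'+1), w m * runMax u (m+1) := by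
        rw [Finset.range_eq_Ico, ← Finset.sum_Ico_consecutive _ (Nat.zero_le N₀) (by omega), Finset.range_eq_Ico]
      have h1 : ∑ m ∈ Finset.Ico N₀ (k'+1), w m * runMax u (m+1) ≤ ε * u (k'+1) := by
        calc ∑ m ∈ Finset.Ico N₀ (k'+1), w m * runMax u (m+1)
            ≤ ∑ m ∈ Finset.Ico N₀ (k'+1), w m * u (k'+1) := Finset.sum_le_sum hbound
          _ = (∑ m ∈ Finset.Ico N₀ (k'+1), w m) * u (k'+1) := by rw [Finset.sum_mul]
          _ ≤ ε * u (k'+1) := mul_le_mul_of_nonneg_right (hN₀ _) (hu _)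
      have h2 := hrec (k'+1)
      rw [hsplit] at h2
      have h3 : D₂ * ε ≤ 1/4 := by
        rw [hεdef, mul_one_div, div_le_div_iff₀ (by positivity) (by norm_num)]
        linarith
      have h6 : u (k'+1) ≤ K + (1/4) * u (k'+1) := by
        have : D₂ * (ε * u (k'+1)) ≤ (1/4) * u (k'+1) := by
          calc D₂ * (ε * u (k'+1)) = (D₂ * ε) * u (k'+1) := by ring
            _ ≤ (1/4) * u (k'+1) := mul_le_mul_of_nonneg_right h3 (hu _)
        calc u (k'+1) ≤ D₁ + D₂ * (∑ m ∈ Finset.range N₀, w m * runMax u (m+1) + ∑ m ∈ Finset.Ico N₀ (k'+1), w m * runMax u (m+1)) := h2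
          _ = D₁ + D₂ * ∑ m ∈ Finset.range N₀, w m * runMax u (m+1) + D₂ * ∑ m ∈ Finset.Ico N₀ (k'+1), w m * runMax u (m+1) := by ring
          _ ≤ D₁ + D₂ * ∑ m ∈ Finset.range N₀, w m * runMax u (m+1) + D₂ * (ε * u (k'+1)) := by
              have := mul_le_mul_of_nonneg_left h1 hD₂
              linarith
          _ ≤ K + (1/4) * u (k'+1) := by rw [hK]; linarith
      linarith


/-- representation of the Jost function via the orthogonal
polynomials: `Ω(z) = ζ f_{-1} = 1 - 2 ∑_{n≥0} ζ^{n+1} (VP(z))_n`. -/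
theorem jost_function_representation
    (a b : ℕ → ℝ) (ha : ∀ n, 0 < a n)
    (htr : Summable (fun n : ℕ => |a n - 1/2| + |b n|))
    (ζ : ℂ) (hζ0 : 0 < ‖ζ‖) (hζ1 : ‖ζ‖ ≤ 1) (hζp : ζ ≠ 1) (hζm : ζ ≠ -1)
    (z : ℂ) (hz : z = (ζ + ζ⁻¹) / 2)
    (f : ℤ → ℂ) (hf : IsJacobiSol a b z f)
    (hasym : Filter.Tendsto (fun n : ℕ => f (n : ℤ) * ζ ^ (-(n : ℤ))) Filter.atTop (nhds 1))
    (P : ℤ → ℂ) (hP : IsJacobiSol a b z P) (hPm : P (-1) = 0) (hP0 : P 0 = 1) :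
    Summable (fun n : ℕ => ‖ζ ^ (n + 1) * jV a b P n‖) ∧
    ζ * f (-1) = 1 - 2 * ∑' n : ℕ, ζ ^ (n + 1) * jV a b P n := by
  have hζne : ζ ≠ 0 := by
    intro h; rw [h] at hζ0; simp at hζ0
  have hζsq : ζ^2 - 1 ≠ 0 := by
    intro h
    have h2 : (ζ - 1) * (ζ + 1) = 0 := by linear_combination h
    rcases mul_eq_zero.mp h2 with h' | h'
    · exact hζp (by linear_combination h')
    · exact hζm (by linear_combination h')
  have hnormsq : 0 < ‖ζ^2 - 1‖ := norm_pos_iff.mpr hζsq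
  have hDuh := duhamel hζne hζsq hz hP hPm hP0
  -- the sequences u and w
  set u : ℕ → ℝ := fun n => ‖ζ^n * P (n:ℤ)‖ with hu_def
  set w : ℕ → ℝ := fun m => |aext a ((m:ℤ)-1) - 1/2| + |b m| + |a m - 1/2| with hw_def
  have hu0 : ∀ n, 0 ≤ u n := fun n => norm_nonneg _
  have hw0 : ∀ n, 0 ≤ w n := fun n => by positivity
  have hsa : Summable (fun m : ℕ => |a m - 1/2|) :=
    htr.of_nonneg_of_le (fun m => abs_nonneg _)
      (fun m => le_add_of_nonneg_right (abs_nonneg _))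
  have hsb : Summable (fun m : ℕ => |b m|) :=
    htr.of_nonneg_of_le (fun m => abs_nonneg _)
      (fun m => le_add_of_nonneg_left (abs_nonneg _))
  have hsext : Summable (fun m : ℕ => |aext a ((m:ℤ)-1) - 1/2|) := by
    apply (summable_nat_add_iff 1).mp
    have he : (fun m : ℕ => |aext a (((m+1:ℕ):ℤ)-1) - 1/2|) = fun m => |a m - 1/2| := by
      funext m
      rw [show (((m+1:ℕ):ℤ)-1) = (m:ℤ) by push_cast; ring, aext_natCast]
    exact he ▸ hsa
  have hw_sum : Summable w := (hsext.add hsb).add hsa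
  -- key pointwise bound on the perturbation terms
  have hkey : ∀ m : ℕ, ‖ζ^(m+1) * jV a b P m‖ ≤ w m * runMax u (m+1) := by
    intro m
    have hζp2 : ‖ζ‖^2 ≤ 1 := pow_le_one₀ (norm_nonneg _) hζ1
    match m with
    | 0 =>
      have hexp : ζ^(0+1) * jV a b P 0
          = (b 0:ℂ) * ζ * (ζ^0 * P ((0:ℕ):ℤ)) + ((a 0 - 1/2:ℝ):ℂ) * (ζ^(0+1) * P ((1:ℕ):ℤ)) := by
        unfold jV
        rw [show (((0:ℕ):ℤ)-1) = (-1:ℤ) by norm_num, aext_neg_one, hPm,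
          show (((0:ℕ):ℤ)+1) = ((1:ℕ):ℤ) by norm_num]
        push_cast
        ring
      rw [hexp]
      have h1 : ‖(b 0:ℂ) * ζ * (ζ^0 * P ((0:ℕ):ℤ))‖ ≤ |b 0| * runMax u 1 := by
        rw [norm_mul, norm_mul, Complex.norm_real]
        have : ‖ζ‖ * u 0 ≤ runMax u 1 := by
          calc ‖ζ‖ * u 0 ≤ 1 * u 0 := by gcongr
            _ = u 0 := one_mul _
            _ ≤ runMax u 1 := le_runMax u (by omega)
        calc |b 0| * ‖ζ‖ * ‖ζ^0 * P ((0:ℕ):ℤ)‖ = |b 0| * (‖ζ‖ * u 0) := by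
              rw [hu_def]; ring
          _ ≤ |b 0| * runMax u 1 := mul_le_mul_of_nonneg_left this (abs_nonneg _)
      have h2 : ‖((a 0 - 1/2:ℝ):ℂ) * (ζ^(0+1) * P ((1:ℕ):ℤ))‖ ≤ |a 0 - 1/2| * runMax u 1 := by
        rw [norm_mul, Complex.norm_real]
        have h' : ‖ζ^(0+1) * P ((1:ℕ):ℤ)‖ = u 1 := by rw [hu_def]
        rw [h']
        exact mul_le_mul_of_nonneg_left (le_runMax u le_rfl) (abs_nonneg _)
      calc ‖_ + _‖ ≤ _ := norm_add_le _ _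
        _ ≤ |b 0| * runMax u 1 + |a 0 - 1/2| * runMax u 1 := add_le_add h1 h2
        _ ≤ w 0 * runMax u (0+1) := by
          rw [hw_def]
          have hR : 0 ≤ runMax u 1 := le_trans (hu0 0) (le_runMax u (by omega))
          nlinarith [abs_nonneg (aext a ((0:ℤ)-1) - 1/2)]
    | (k+1) =>
      have e1 : (((k+1:ℕ):ℤ)-1) = (k:ℤ) := by push_cast; ring
      have e2 : (((k+1:ℕ):ℤ)+1) = ((k+2:ℕ):ℤ) := by push_cast; ring
      have hexp : ζ^(k+1+1) * jV a b P (k+1)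
          = ((a k - 1/2:ℝ):ℂ) * ζ^2 * (ζ^k * P ((k:ℕ):ℤ))
            + (b (k+1):ℂ) * ζ * (ζ^(k+1) * P ((k+1:ℕ):ℤ))
            + ((a (k+1) - 1/2:ℝ):ℂ) * (ζ^(k+2) * P ((k+2:ℕ):ℤ)) := by
        unfold jV
        rw [e1, e2, aext_natCast]
        ring
      rw [hexp]
      have hRnn : 0 ≤ runMax u (k+2) := le_trans (hu0 0) (le_runMax u (by omega))
      have huk : u k ≤ runMax u (k+2) := le_runMax u (by omega)
      have huk1 : u (k+1) ≤ runMax u (k+2) := le_runMax u (by omega)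
      have huk2 : u (k+2) ≤ runMax u (k+2) := le_runMax u le_rfl
      have h1 : ‖((a k - 1/2:ℝ):ℂ) * ζ^2 * (ζ^k * P ((k:ℕ):ℤ))‖ ≤ |a k - 1/2| * runMax u (k+2) := by
        rw [norm_mul, norm_mul, Complex.norm_real, norm_pow]
        calc |a k - 1/2| * ‖ζ‖^2 * u k ≤ |a k - 1/2| * 1 * runMax u (k+2) := by
              apply mul_le_mul (mul_le_mul_of_nonneg_left hζp2 (abs_nonneg _)) huk (hu0 k)
              positivity
          _ = |a k - 1/2| * runMax u (k+2) := by ring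
      have h2 : ‖(b (k+1):ℂ) * ζ * (ζ^(k+1) * P ((k+1:ℕ):ℤ))‖ ≤ |b (k+1)| * runMax u (k+2) := by
        rw [norm_mul, norm_mul, Complex.norm_real]
        calc |b (k+1)| * ‖ζ‖ * u (k+1) ≤ |b (k+1)| * 1 * runMax u (k+2) := by
              apply mul_le_mul (mul_le_mul_of_nonneg_left hζ1 (abs_nonneg _)) huk1 (hu0 (k+1))
              positivity
          _ = |b (k+1)| * runMax u (k+2) := by ring
      have h3 : ‖((a (k+1) - 1/2:ℝ):ℂ) * (ζ^(k+2) * P ((k+2:ℕ):ℤ))‖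
          ≤ |a (k+1) - 1/2| * runMax u (k+2) := by
        rw [norm_mul, Complex.norm_real]
        exact mul_le_mul_of_nonneg_left huk2 (abs_nonneg _)
      calc ‖_ + _ + _‖ ≤ ‖_ + _‖ + ‖_‖ := norm_add_le _ _
        _ ≤ (‖_‖ + ‖_‖) + ‖_‖ := by gcongr; exact norm_add_le _ _
        _ ≤ (|a k - 1/2| * runMax u (k+2) + |b (k+1)| * runMax u (k+2))
            + |a (k+1) - 1/2| * runMax u (k+2) := by
          exact add_le_add (add_le_add h1 h2) h3
        _ = (|a k - 1/2| + |b (k+1)| + |a (k+1) - 1/2|) * runMax u (k+2) := by ring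
        _ = w (k+1) * runMax u (k+1+1) := by
          rw [hw_def]
          congr 2
          rw [e1, aext_natCast]
  -- Duhamel-based inequality
  have hrec : ∀ n, u n ≤ 2/‖ζ^2-1‖ + (4/‖ζ^2-1‖) * ∑ m ∈ Finset.range n, w m * runMax u (m+1) := by
    intro n
    have expand : ζ^n * P ((n:ℕ):ℤ)
        = ζ^n * Ffree ζ n - ∑ m ∈ Finset.range n, (ζ^n * gker ζ (n-m)) * jV a b P m := by
      rw [hDuh n]
      unfold Rfun
      rw [mul_sub, Finset.mul_sum]
      congr 1
      refine Finset.sum_congr rfl fun m hm => by ring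
    have : u n = ‖ζ^n * P ((n:ℕ):ℤ)‖ := by rw [hu_def]
    rw [this, expand]
    calc ‖ζ^n * Ffree ζ n - ∑ m ∈ Finset.range n, (ζ^n * gker ζ (n-m)) * jV a b P m‖
        ≤ ‖ζ^n * Ffree ζ n‖ + ‖∑ m ∈ Finset.range n, (ζ^n * gker ζ (n-m)) * jV a b P m‖ :=
          norm_sub_le _ _
      _ ≤ 2/‖ζ^2-1‖ + ∑ m ∈ Finset.range n, ‖(ζ^n * gker ζ (n-m)) * jV a b P m‖ := by
          gcongr
          · exact norm_pow_mul_Ffree hζne hζ1 hζsq n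
          · exact norm_sum_le _ _
      _ ≤ 2/‖ζ^2-1‖ + ∑ m ∈ Finset.range n, (4/‖ζ^2-1‖) * (w m * runMax u (m+1)) := by
          gcongr with m hm
          rw [Finset.mem_range] at hm
          rw [norm_mul]
          calc ‖ζ^n * gker ζ (n-m)‖ * ‖jV a b P m‖
              ≤ (4/‖ζ^2-1‖ * ‖ζ‖^(m+1)) * ‖jV a b P m‖ := by
                gcongr
                exact norm_pow_mul_gker hζne hζ1 hζsq (le_of_lt hm)
            _ = (4/‖ζ^2-1‖) * ‖ζ^(m+1) * jV a b P m‖ := by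
                rw [norm_mul, norm_pow]; ring
            _ ≤ (4/‖ζ^2-1‖) * (w m * runMax u (m+1)) :=
                mul_le_mul_of_nonneg_left (hkey m) (by positivity)
      _ = 2/‖ζ^2-1‖ + (4/‖ζ^2-1‖) * ∑ m ∈ Finset.range n, w m * runMax u (m+1) := by
          rw [Finset.mul_sum]
  obtain ⟨C, hC0, hCb⟩ := gronwall hu0 hw0 (by positivity : (0:ℝ) ≤ 2/‖ζ^2-1‖)
    (by positivity : (0:ℝ) ≤ 4/‖ζ^2-1‖) hw_sum hrec
  -- summability of the series
  have hterm : ∀ n : ℕ, ‖ζ^(n+1) * jV a b P n‖ ≤ w n * C := by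
    intro n
    calc ‖ζ^(n+1) * jV a b P n‖ ≤ w n * runMax u (n+1) := hkey n
      _ ≤ w n * C := mul_le_mul_of_nonneg_left (runMax_le u fun j _ => hCb j) (hw0 n)
  have hsum1 : Summable (fun n : ℕ => ‖ζ^(n+1) * jV a b P n‖) :=
    Summable.of_nonneg_of_le (fun n => norm_nonneg _) hterm (hw_sum.mul_right C)
  refine ⟨hsum1, ?_⟩
  -- free-form equation
  have hfree : ∀ n:ℕ, jV a b P n = z * P (n:ℤ) - (1/2) * P ((n:ℤ)-1) - (1/2) * P ((n:ℤ)+1) := by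
    intro n
    have h := hP n
    unfold jV
    push_cast at h ⊢
    linear_combination h
  have hw1 : ζ * ζ⁻¹ = 1 := mul_inv_cancel₀ hζne
  have hzpow : ∀ k:ℕ, 2*ζ^(k+1)*z = ζ^(k+2) + ζ^k := by
    intro k
    rw [hz]
    linear_combination ζ^k * hw1
  -- telescoping identity for partial sums
  have hTel : ∀ N:ℕ, ∑ n ∈ Finset.range (N+1), ζ^(n+1) * jV a b P n
      = (1/2) * (ζ^(N+2) * P (N:ℤ) - ζ^(N+1) * P ((N:ℤ)+1) + 1) := by
    intro N
    induction N with
    | zero =>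
      rw [Finset.sum_range_one, hfree 0]
      norm_num
      rw [hPm, hP0]
      linear_combination (1/2) * hzpow 0
    | succ N ih =>
      rw [Finset.sum_range_succ, ih, hfree (N+1)]
      rw [show (((N+1:ℕ):ℤ)-1) = (N:ℤ) by push_cast; ring,
        show ((N+1:ℕ):ℤ) = (N:ℤ)+1 by push_cast; ring]
      push_cast
      linear_combination (P ((N:ℤ)+1)/2) * hzpow (N+1)
  -- the Wronskian identity
  have hW : ∀ n:ℕ, ((a n:ℝ):ℂ) * (f (n:ℤ) * P ((n:ℤ)+1) - f ((n:ℤ)+1) * P (n:ℤ)) = f (-1) / 2 := by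
    intro n
    induction n with
    | zero =>
      have h1 := hf 0
      have h2 := hP 0
      norm_num at h1 h2 ⊢
      rw [aext_neg_one] at h1 h2
      rw [hPm, hP0] at h2
      rw [hP0]
      push_cast at h1 h2
      linear_combination f 0 * h2 - h1
    | succ n ih =>
      have h1 := hf (n+1)
      have h2 := hP (n+1)
      rw [show (((n+1:ℕ):ℤ)-1) = (n:ℤ) by push_cast; ring, aext_natCast,
        show ((n+1:ℕ):ℤ) = (n:ℤ)+1 by push_cast; ring] at h1 h2
      rw [show ((n+1:ℕ):ℤ) = (n:ℤ)+1 by push_cast; ring]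
      rw [show ((n:ℤ)+1+1) = (n:ℤ)+2 by ring] at h1 h2 ⊢
      linear_combination ih - P ((n:ℤ)+1) * h1 + f ((n:ℤ)+1) * h2
  -- limit of the coefficients
  have haR : Tendsto (fun n => a n) atTop (nhds (1/2)) := by
    have h1 : Tendsto (fun n => |a n - 1/2| + |b n|) atTop (nhds 0) := htr.tendsto_atTop_zero
    have h2 : Tendsto (fun n => a n - 1/2) atTop (nhds 0) := by
      apply squeeze_zero_norm _ h1
      intro n
      rw [Real.norm_eq_abs]
      exact le_add_of_nonneg_right (abs_nonneg _)
    have := h2.add_const (1/2)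
    simpa using this
  have haC : Tendsto (fun M => 2*((a M:ℝ):ℂ)) atTop (nhds 1) := by
    have h4 : Tendsto (fun n => ((a n:ℝ):ℂ)) atTop (nhds ((1/2:ℝ):ℂ)) :=
      (Complex.continuous_ofReal.tendsto _).comp haR
    have h5 := h4.const_mul (2:ℂ)
    norm_num at h5
    exact h5
  -- asymptotics of f
  have hε0 : Tendsto (fun M:ℕ => f (M:ℤ) * ζ^(-(M:ℤ)) - 1) atTop (nhds 0) := by
    have := hasym.sub_const 1
    simpa using this
  have hfexp : ∀ M:ℕ, f (M:ℤ) = ζ^M * (1 + (f (M:ℤ) * ζ^(-(M:ℤ)) - 1)) := by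
    intro M
    have hzp : ζ^(M:ℕ) * ζ^(-(M:ℤ)) = 1 := by
      rw [← zpow_natCast ζ M, ← zpow_add₀ hζne]
      simp
    linear_combination (-(f (M:ℤ))) * hzp
  -- the central identity
  have hEq : ∀ M:ℕ, (2*((a M:ℝ):ℂ)) * (1 - 2 * ∑ n ∈ Finset.range (M+1), ζ^(n+1) * jV a b P n)
      = ζ * f (-1) + (2*((a M:ℝ):ℂ)) *
        (-(f (M:ℤ) * ζ^(-(M:ℤ)) - 1) * (ζ^(M+1) * P ((M:ℤ)+1))
          + ζ^2 * (f ((M+1:ℕ):ℤ) * ζ^(-((M+1:ℕ):ℤ)) - 1) * (ζ^M * P (M:ℤ))) := by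
    intro M
    rw [hTel M]
    have h1 := hW M
    have h2 := hfexp M
    have h3 := hfexp (M+1)
    rw [show ((M+1:ℕ):ℤ) = (M:ℤ)+1 by push_cast; ring] at h3
    rw [show ((M+1:ℕ):ℤ) = (M:ℤ)+1 by push_cast; ring]
    linear_combination 2*ζ*h1 - 2*ζ*((a M:ℝ):ℂ)*P ((M:ℤ)+1)*h2 + 2*ζ*((a M:ℝ):ℂ)*P (M:ℤ)*h3
  -- pass to the limit
  have hvals : Summable (fun n : ℕ => ζ^(n+1) * jV a b P n) := hsum1.of_norm
  have hTS : Tendsto (fun N => ∑ n ∈ Finset.range N, ζ^(n+1) * jV a b P n) atTop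
      (nhds (∑' n : ℕ, ζ^(n+1) * jV a b P n)) := hvals.hasSum.tendsto_sum_nat
  have hTS1 : Tendsto (fun M : ℕ => ∑ n ∈ Finset.range (M+1), ζ^(n+1) * jV a b P n) atTop
      (nhds (∑' n : ℕ, ζ^(n+1) * jV a b P n)) := hTS.comp (tendsto_add_atTop_nat 1)
  have hL : Tendsto (fun M : ℕ => (2*((a M:ℝ):ℂ)) *
      (1 - 2 * ∑ n ∈ Finset.range (M+1), ζ^(n+1) * jV a b P n)) atTop
      (nhds (1 * (1 - 2 * ∑' n : ℕ, ζ^(n+1) * jV a b P n))) :=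
    haC.mul (tendsto_const_nhds.sub (hTS1.const_mul 2))
  -- the error term tends to zero
  have hεn : Tendsto (fun M : ℕ => ‖f (M:ℤ) * ζ^(-(M:ℤ)) - 1‖) atTop (nhds 0) := by
    have := hε0.norm
    simpa using this
  have hεn1 : Tendsto (fun M : ℕ => ‖f ((M+1:ℕ):ℤ) * ζ^(-((M+1:ℕ):ℤ)) - 1‖) atTop (nhds 0) :=
    hεn.comp (tendsto_add_atTop_nat 1)
  have hE : Tendsto (fun M : ℕ =>
      -(f (M:ℤ) * ζ^(-(M:ℤ)) - 1) * (ζ^(M+1) * P ((M:ℤ)+1))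
        + ζ^2 * (f ((M+1:ℕ):ℤ) * ζ^(-((M+1:ℕ):ℤ)) - 1) * (ζ^M * P (M:ℤ))) atTop (nhds 0) := by
    apply squeeze_zero_norm (a := fun M : ℕ => ‖f (M:ℤ) * ζ^(-(M:ℤ)) - 1‖ * C
      + ‖f ((M+1:ℕ):ℤ) * ζ^(-((M+1:ℕ):ℤ)) - 1‖ * C)
    · intro M
      have hub1 : ‖ζ^(M+1) * P ((M:ℤ)+1)‖ ≤ C := by
        have : ‖ζ^(M+1) * P ((M+1:ℕ):ℤ)‖ = u (M+1) := by rw [hu_def]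
        rw [show ((M:ℤ)+1) = ((M+1:ℕ):ℤ) by push_cast; ring, this]
        exact hCb (M+1)
      have hub2 : ‖ζ^M * P (M:ℤ)‖ ≤ C := hCb M
      calc ‖_ + _‖ ≤ ‖_‖ + ‖_‖ := norm_add_le _ _
        _ ≤ ‖f (M:ℤ) * ζ^(-(M:ℤ)) - 1‖ * C
            + ‖f ((M+1:ℕ):ℤ) * ζ^(-((M+1:ℕ):ℤ)) - 1‖ * C := by
          apply add_le_add
          · rw [norm_mul, norm_neg]
            exact mul_le_mul_of_nonneg_left hub1 (norm_nonneg _)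
          · rw [norm_mul, norm_mul, norm_pow]
            calc ‖ζ‖^2 * ‖f ((M+1:ℕ):ℤ) * ζ^(-((M+1:ℕ):ℤ)) - 1‖ * ‖ζ^M * P (M:ℤ)‖
                ≤ 1 * ‖f ((M+1:ℕ):ℤ) * ζ^(-((M+1:ℕ):ℤ)) - 1‖ * C := by
                  have h9 : ‖ζ‖^2 ≤ 1 := pow_le_one₀ (norm_nonneg _) hζ1
                  exact mul_le_mul (mul_le_mul_of_nonneg_right h9 (norm_nonneg _)) hub2
                    (norm_nonneg _) (by positivity)
              _ = ‖f ((M+1:ℕ):ℤ) * ζ^(-((M+1:ℕ):ℤ)) - 1‖ * C := by ring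
    · have := (hεn.mul_const C).add (hεn1.mul_const C)
      simpa using this
  have hR : Tendsto (fun M : ℕ => ζ * f (-1) + (2*((a M:ℝ):ℂ)) *
      (-(f (M:ℤ) * ζ^(-(M:ℤ)) - 1) * (ζ^(M+1) * P ((M:ℤ)+1))
        + ζ^2 * (f ((M+1:ℕ):ℤ) * ζ^(-((M+1:ℕ):ℤ)) - 1) * (ζ^M * P (M:ℤ)))) atTop
      (nhds (ζ * f (-1) + 1 * 0)) :=
    tendsto_const_nhds.add (haC.mul hE)
  have hfinal : 1 * (1 - 2 * ∑' n : ℕ, ζ^(n+1) * jV a b P n) = ζ * f (-1) + 1 * 0 := by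
    apply tendsto_nhds_unique _ hR
    have hfe : (fun M : ℕ => (2*((a M:ℝ):ℂ)) *
        (1 - 2 * ∑ n ∈ Finset.range (M+1), ζ^(n+1) * jV a b P n))
        = (fun M : ℕ => ζ * f (-1) + (2*((a M:ℝ):ℂ)) *
          (-(f (M:ℤ) * ζ^(-(M:ℤ)) - 1) * (ζ^(M+1) * P ((M:ℤ)+1))
            + ζ^2 * (f ((M+1:ℕ):ℤ) * ζ^(-((M+1:ℕ):ℤ)) - 1) * (ζ^M * P (M:ℤ)))) :=
      funext hEq
    exact hfe ▸ hL
  linear_combination -hfinal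
end
end

section
/- Assume the first-moment condition ∑_{n≥0} (n+1)(|a_n - 1/2| + |b_n|) < ∞, and let ε ∈ {1, -1}. Then there exists a solution f = (f_n)_{n≥-1} of the Jacobi equation at spectral parameter z = ε such that f_n ε^{-n} → 1 as n → ∞ (i.e. f_n = εⁿ + o(1)). -/
open Filter Finset MeasureTheory

noncomputable section

/-- The tail operator for the summation (Volterra-type) equation at the spectral edge. -/
def Vop (a b : ℕ → ℝ) (ε : ℝ) (N : ℕ) (G : ℕ → ℂ) (j : ℕ) : ℂ :=
  2 * (((a (j + N) : ℂ) - 1/2) * G j + (ε : ℂ) * (b (j + N + 1) : ℂ) * G (j + 1)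
    + ((a (j + N + 1) : ℂ) - 1/2) * G (j + 2))

/-- Downward extension of a solution by recursion: `Fdown j` represents `f (N+1-j)`. -/
def Fdown (a b : ℕ → ℝ) (ε : ℝ) (N : ℕ) (g0 g1 : ℂ) : ℕ → ℂ
  | 0 => g1
  | 1 => g0
  | (j+2) => (((ε : ℂ) - (b (N - j) : ℂ)) * Fdown a b ε N g0 g1 (j+1)
      - (a (N - j) : ℂ) * Fdown a b ε N g0 g1 j) / ((aext a ((N : ℤ) - j - 1) : ℝ) : ℂ)

/-- under the first-moment condition the Jost solution exists at the
edge points `z = ±1`, with `f_n = εⁿ + o(1)`. -/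
theorem jost_solution_at_edge
    (a b : ℕ → ℝ) (ha : ∀ n, 0 < a n)
    (hm : Summable (fun n : ℕ => ((n : ℝ) + 1) * (|a n - 1/2| + |b n|)))
    (ε : ℝ) (hε : ε = 1 ∨ ε = -1) :
    ∃ f : ℤ → ℂ, IsJacobiSol a b (ε : ℂ) f ∧
      Filter.Tendsto (fun n : ℕ => f (n : ℤ) * (ε : ℂ) ^ (-(n : ℤ))) Filter.atTop (nhds 1) := by
  have hε1 : ε * ε = 1 := by rcases hε with h | h <;> rw [h] <;> norm_num
  have hεabs : |ε| = 1 := by rcases hε with h | h <;> rw [h] <;> norm_num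
  have hεC : (ε : ℂ) * (ε : ℂ) = 1 := by rw [← Complex.ofReal_mul, hε1, Complex.ofReal_one]
  have hεne : (ε : ℂ) ≠ 0 := by
    intro h0; rw [h0, mul_zero] at hεC; exact one_ne_zero hεC.symm
  set w : ℕ → ℝ := fun m => |a m - 1/2| + |b m| with hwdef
  have hw0 : ∀ m, 0 ≤ w m := fun m => add_nonneg (abs_nonneg _) (abs_nonneg _)
  set h : ℕ → ℝ := fun m => ((m : ℝ) + 1) * w m with hhdef
  have hh0 : ∀ m, 0 ≤ h m := fun m => mul_nonneg (by positivity) (hw0 m)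
  have hhsum : Summable h := hm
  -- choose N with small tail
  obtain ⟨N, hN⟩ : ∃ N : ℕ, ∑' j, h (j + N) < 1/100 := by
    have ht := tendsto_sum_nat_add h
    exact (ht.eventually (eventually_lt_nhds (by norm_num : (0:ℝ) < 1/100))).exists
  have hsumN : Summable (fun j => h (j + N)) := (summable_nat_add_iff N).2 hhsum
  have hsumN1 : Summable (fun j => h (j + (N + 1))) := (summable_nat_add_iff (N+1)).2 hhsum
  have hsumN1' : Summable (fun j => h (j + N + 1)) :=
    hsumN1.congr fun j => congrArg h (by omega)
  have hN1le : ∑' j, h (j + (N + 1)) ≤ ∑' j, h (j + N) := by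
    refine Summable.tsum_le_tsum_of_inj (fun j => j + 1) (add_left_injective 1)
      (fun c _ => hh0 _) (fun j => le_of_eq (by rw [show j + (N+1) = (j+1) + N by omega]))
      hsumN1 hsumN
  set W : ℕ → ℝ := fun j => 2 * (w (j + N) + w (j + N + 1)) with hWdef
  have hW0 : ∀ j, 0 ≤ W j := fun j => by
    have := hw0 (j + N); have := hw0 (j + N + 1); simp only [hWdef]; nlinarith
  set q : ℕ → ℝ := fun j => ((j : ℝ) + 1) * W j with hqdef
  have hq0 : ∀ j, 0 ≤ q j := fun j => mul_nonneg (by positivity) (hW0 j)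
  have hqle : ∀ j, q j ≤ 2 * h (j + N) + 2 * h (j + N + 1) := by
    intro j
    have h1 := hw0 (j + N); have h2 := hw0 (j + N + 1)
    have e1 : ((j : ℝ) + 1) ≤ ((j + N : ℕ) : ℝ) + 1 := by
      push_cast; linarith [Nat.cast_nonneg (α := ℝ) N]
    have e2 : ((j : ℝ) + 1) ≤ ((j + N + 1 : ℕ) : ℝ) + 1 := by
      push_cast; linarith [Nat.cast_nonneg (α := ℝ) N]
    simp only [hqdef, hWdef, hhdef]
    nlinarith [mul_le_mul_of_nonneg_right e1 h1, mul_le_mul_of_nonneg_right e2 h2]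
  have hqsum : Summable q :=
    Summable.of_nonneg_of_le hq0 hqle ((hsumN.mul_left 2).add (hsumN1'.mul_left 2))
  set C : ℝ := ∑' j, q j with hCdef
  have hC0 : 0 ≤ C := tsum_nonneg hq0
  have hC1 : C < 1/2 := by
    have h2 : C ≤ ∑' j, (2 * h (j + N) + 2 * h (j + N + 1)) :=
      Summable.tsum_le_tsum hqle hqsum ((hsumN.mul_left 2).add (hsumN1'.mul_left 2))
    rw [Summable.tsum_add (hsumN.mul_left 2) (hsumN1'.mul_left 2), tsum_mul_left, tsum_mul_left] at h2
    have h3 : ∑' j, h (j + N + 1) = ∑' j, h (j + (N + 1)) :=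
      tsum_congr fun j => congrArg h (by omega)
    have h4 : 0 ≤ ∑' j, h (j + (N + 1)) := tsum_nonneg fun j => hh0 (j + (N+1))
    linarith
  -- shifted sums
  have hqshift : ∀ k : ℕ, Summable (fun i : ℕ => q (k + i)) := fun k =>
    ((summable_nat_add_iff k).2 hqsum).congr fun i : ℕ => congrArg q (by omega)
  have hterm0 : ∀ (k i : ℕ), ((i : ℝ) + 1) * W (k + i) ≤ q (k + i) := by
    intro k i
    have hle : ((i : ℝ) + 1) ≤ ((k + i : ℕ) : ℝ) + 1 := by
      push_cast; linarith [Nat.cast_nonneg (α := ℝ) k]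
    simpa only [hqdef] using mul_le_mul_of_nonneg_right hle (hW0 (k + i))
  have htk : ∀ k : ℕ, Summable (fun i : ℕ => ((i : ℝ) + 1) * W (k + i)) := fun k =>
    Summable.of_nonneg_of_le (fun i : ℕ => mul_nonneg (by positivity) (hW0 _))
      (fun i : ℕ => hterm0 k i) (hqshift k)
  have hCk : ∀ k : ℕ, ∑' i : ℕ, ((i : ℝ) + 1) * W (k + i) ≤ C := by
    intro k
    have h1 : ∑' i : ℕ, ((i : ℝ) + 1) * W (k + i) ≤ ∑' i : ℕ, q (k + i) :=
      Summable.tsum_le_tsum (hterm0 k) (htk k) (hqshift k)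
    have h2 : ∑' i : ℕ, q (k + i) ≤ C :=
      Summable.tsum_le_tsum_of_inj (fun i : ℕ => k + i) (add_right_injective k)
        (fun c _ => hq0 c) (fun i : ℕ => le_refl _) (hqshift k) hqsum
    linarith
  -- bound on Vop
  have hVnorm : ∀ (H : ℕ → ℂ) (M : ℝ), (∀ m, ‖H m‖ ≤ M) →
      ∀ j, ‖Vop a b ε N H j‖ ≤ W j * M := by
    intro H M hM j
    have hM0 : 0 ≤ M := (norm_nonneg _).trans (hM 0)
    have e1 : ‖((a (j + N) : ℂ) - 1/2) * H j‖ ≤ |a (j + N) - 1/2| * M := by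
      rw [norm_mul, show ((a (j + N) : ℂ) - 1/2) = ((a (j + N) - 1/2 : ℝ) : ℂ) by push_cast; ring,
        Complex.norm_real, Real.norm_eq_abs]
      exact mul_le_mul_of_nonneg_left (hM j) (abs_nonneg _)
    have e2 : ‖(ε : ℂ) * (b (j + N + 1) : ℂ) * H (j + 1)‖ ≤ |b (j + N + 1)| * M := by
      rw [norm_mul, norm_mul, Complex.norm_real, Complex.norm_real, Real.norm_eq_abs,
        Real.norm_eq_abs, hεabs, one_mul]
      exact mul_le_mul_of_nonneg_left (hM (j + 1)) (abs_nonneg _)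
    have e3 : ‖((a (j + N + 1) : ℂ) - 1/2) * H (j + 2)‖ ≤ |a (j + N + 1) - 1/2| * M := by
      rw [norm_mul, show ((a (j + N + 1) : ℂ) - 1/2) = ((a (j + N + 1) - 1/2 : ℝ) : ℂ) by
        push_cast; ring, Complex.norm_real, Real.norm_eq_abs]
      exact mul_le_mul_of_nonneg_left (hM (j + 2)) (abs_nonneg _)
    have e4 : ‖Vop a b ε N H j‖ ≤ 2 * (‖((a (j + N) : ℂ) - 1/2) * H j‖
        + ‖(ε : ℂ) * (b (j + N + 1) : ℂ) * H (j + 1)‖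
        + ‖((a (j + N + 1) : ℂ) - 1/2) * H (j + 2)‖) := by
      rw [Vop, norm_mul, Complex.norm_ofNat]
      exact mul_le_mul_of_nonneg_left (norm_add₃_le) (by norm_num)
    have w1 : |a (j + N) - 1/2| ≤ w (j + N) := by
      simp only [hwdef]; linarith [abs_nonneg (b (j + N))]
    have w2 : |b (j + N + 1)| + |a (j + N + 1) - 1/2| = w (j + N + 1) := by
      simp only [hwdef]; ring
    calc ‖Vop a b ε N H j‖
        ≤ 2 * (|a (j + N) - 1/2| * M + |b (j + N + 1)| * M + |a (j + N + 1) - 1/2| * M) := by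
          linarith
      _ ≤ W j * M := by
          simp only [hWdef, hwdef]
          nlinarith [mul_nonneg (abs_nonneg (b (j + N))) hM0]
  have htermC : ∀ (H : ℕ → ℂ) (M : ℝ), (∀ m, ‖H m‖ ≤ M) → ∀ (k i : ℕ),
      ‖((i : ℂ) + 1) * Vop a b ε N H (k + i)‖ ≤ ((i : ℝ) + 1) * W (k + i) * M := by
    intro H M hM k i
    rw [norm_mul, show ((i : ℂ) + 1) = ((i + 1 : ℕ) : ℂ) by push_cast; ring,
      Complex.norm_natCast, mul_assoc]
    push_cast
    exact mul_le_mul_of_nonneg_left (hVnorm H M hM (k + i)) (by positivity)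
  have hsummC : ∀ (H : ℕ → ℂ) (M : ℝ), (∀ m, ‖H m‖ ≤ M) → ∀ k : ℕ,
      Summable (fun i : ℕ => ‖((i : ℂ) + 1) * Vop a b ε N H (k + i)‖) := by
    intro H M hM k
    exact Summable.of_nonneg_of_le (fun i : ℕ => norm_nonneg _) (htermC H M hM k)
      ((htk k).mul_right M)
  have hsumC : ∀ (H : ℕ → ℂ) (M : ℝ), (∀ m, ‖H m‖ ≤ M) → ∀ k : ℕ,
      Summable (fun i : ℕ => ((i : ℂ) + 1) * Vop a b ε N H (k + i)) :=
    fun H M hM k => Summable.of_norm (hsummC H M hM k)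
  have htsumC : ∀ (H : ℕ → ℂ) (M : ℝ), 0 ≤ M → (∀ m, ‖H m‖ ≤ M) → ∀ k : ℕ,
      ‖∑' i : ℕ, ((i : ℂ) + 1) * Vop a b ε N H (k + i)‖ ≤ C * M := by
    intro H M hM0 hM k
    calc ‖∑' i : ℕ, ((i : ℂ) + 1) * Vop a b ε N H (k + i)‖
        ≤ ∑' i : ℕ, ‖((i : ℂ) + 1) * Vop a b ε N H (k + i)‖ :=
          norm_tsum_le_tsum_norm (hsummC H M hM k)
      _ ≤ ∑' i : ℕ, ((i : ℝ) + 1) * W (k + i) * M :=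
          Summable.tsum_le_tsum (htermC H M hM k) (hsummC H M hM k) ((htk k).mul_right M)
      _ = (∑' i : ℕ, ((i : ℝ) + 1) * W (k + i)) * M := tsum_mul_right
      _ ≤ C * M := mul_le_mul_of_nonneg_right (hCk k) hM0
  -- the operator
  set T : (BoundedContinuousFunction ℕ ℂ) → (BoundedContinuousFunction ℕ ℂ) := fun G =>
    BoundedContinuousFunction.ofNormedAddCommGroupDiscrete
      (fun k => 1 - ∑' i : ℕ, ((i : ℂ) + 1) * Vop a b ε N (⇑G) (k + i)) (1 + C * ‖G‖)
      (fun k => by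
        calc ‖1 - ∑' i : ℕ, ((i : ℂ) + 1) * Vop a b ε N (⇑G) (k + i)‖
            ≤ ‖(1 : ℂ)‖ + ‖∑' i : ℕ, ((i : ℂ) + 1) * Vop a b ε N (⇑G) (k + i)‖ := norm_sub_le _ _
          _ ≤ 1 + C * ‖G‖ := by
              have := htsumC (⇑G) ‖G‖ (norm_nonneg G) (fun m => G.norm_coe_le_norm m) k
              simp only [norm_one]
              linarith) with hTdef
  have hTapp : ∀ (G : BoundedContinuousFunction ℕ ℂ) (k : ℕ),
      (T G) k = 1 - ∑' i : ℕ, ((i : ℂ) + 1) * Vop a b ε N (⇑G) (k + i) := fun G k => rfl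
  have hVlin : ∀ (G G' : ℕ → ℂ) (j : ℕ),
      Vop a b ε N G' j - Vop a b ε N G j = Vop a b ε N (fun m => G' m - G m) j := by
    intro G G' j; simp only [Vop]; ring
  have hdist : ∀ G G' : BoundedContinuousFunction ℕ ℂ, dist (T G) (T G') ≤ C * dist G G' := by
    intro G G'
    rw [BoundedContinuousFunction.dist_le (mul_nonneg hC0 dist_nonneg)]
    intro k
    rw [dist_eq_norm, hTapp, hTapp]
    have hM : ∀ m, ‖(fun m => G' m - G m) m‖ ≤ dist G G' := by
      intro m
      rw [← dist_eq_norm]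
      exact (BoundedContinuousFunction.dist_coe_le_dist m).trans (le_of_eq (dist_comm G' G))
    have hsub : (1 - ∑' i : ℕ, ((i : ℂ) + 1) * Vop a b ε N (⇑G) (k + i))
        - (1 - ∑' i : ℕ, ((i : ℂ) + 1) * Vop a b ε N (⇑G') (k + i))
        = ∑' i : ℕ, ((i : ℂ) + 1) * Vop a b ε N (fun m => G' m - G m) (k + i) := by
      have e : (1 - ∑' i : ℕ, ((i : ℂ) + 1) * Vop a b ε N (⇑G) (k + i))
          - (1 - ∑' i : ℕ, ((i : ℂ) + 1) * Vop a b ε N (⇑G') (k + i))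
          = (∑' i : ℕ, ((i : ℂ) + 1) * Vop a b ε N (⇑G') (k + i))
            - ∑' i : ℕ, ((i : ℂ) + 1) * Vop a b ε N (⇑G) (k + i) := by ring
      rw [e, ← Summable.tsum_sub (hsumC (⇑G') ‖G'‖ (fun m => G'.norm_coe_le_norm m) k)
        (hsumC (⇑G) ‖G‖ (fun m => G.norm_coe_le_norm m) k)]
      exact tsum_congr fun i : ℕ => by rw [← mul_sub, hVlin]
    rw [hsub]
    exact htsumC _ _ dist_nonneg hM k
  have hcon : ContractingWith (Real.toNNReal C) T := by
    constructor
    · have h1 : (Real.toNNReal C : ℝ) < 1 := by rw [Real.coe_toNNReal _ hC0]; linarith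
      exact_mod_cast h1
    · refine LipschitzWith.of_dist_le_mul fun x y => ?_
      rw [Real.coe_toNNReal _ hC0]; exact hdist x y
  set G : BoundedContinuousFunction ℕ ℂ := ContractingWith.fixedPoint T hcon with hGdef
  have hfix : T G = G := hcon.fixedPoint_isFixedPt
  have hGv : ∀ k : ℕ, (G : ℕ → ℂ) k = 1 - ∑' i : ℕ, ((i : ℂ) + 1) * Vop a b ε N (⇑G) (k + i) := by
    intro k
    conv_lhs => rw [← hfix]
    exact hTapp G k
  have hGM : ∀ m, ‖(G : ℕ → ℂ) m‖ ≤ ‖G‖ := fun m => G.norm_coe_le_norm m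
  have hs1 : ∀ k : ℕ, Summable (fun i : ℕ => ((i : ℂ) + 1) * Vop a b ε N (⇑G) (k + i)) :=
    hsumC (⇑G) ‖G‖ hGM
  have hs0 : ∀ k : ℕ, Summable (fun i : ℕ => Vop a b ε N (⇑G) (k + i)) := by
    intro k
    refine Summable.of_norm (Summable.of_nonneg_of_le (fun i : ℕ => norm_nonneg _)
      (fun i : ℕ => ?_) ((htk k).mul_right ‖G‖))
    have h1 : ‖Vop a b ε N (⇑G) (k + i)‖ ≤ W (k + i) * ‖G‖ := hVnorm _ _ hGM _
    have h2 : W (k + i) * ‖G‖ ≤ ((i : ℝ) + 1) * W (k + i) * ‖G‖ := by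
      nlinarith [mul_nonneg (mul_nonneg (Nat.cast_nonneg (α := ℝ) i) (hW0 (k + i)))
        (norm_nonneg G)]
    linarith
  have hR : ∀ k : ℕ, (∑' i : ℕ, Vop a b ε N (⇑G) (k + i))
      = Vop a b ε N (⇑G) k + ∑' i : ℕ, Vop a b ε N (⇑G) ((k + 1) + i) := by
    intro k
    rw [Summable.tsum_eq_zero_add (hs0 k)]
    congr 1
    exact tsum_congr fun i : ℕ => congrArg _ (by omega)
  have hS : ∀ k : ℕ, (∑' i : ℕ, ((i : ℂ) + 1) * Vop a b ε N (⇑G) (k + i))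
      = Vop a b ε N (⇑G) k + ((∑' i : ℕ, ((i : ℂ) + 1) * Vop a b ε N (⇑G) ((k + 1) + i))
        + ∑' i : ℕ, Vop a b ε N (⇑G) ((k + 1) + i)) := by
    intro k
    rw [Summable.tsum_eq_zero_add (hs1 k)]
    have e1 : ∀ i : ℕ, (((i + 1 : ℕ) : ℂ) + 1) * Vop a b ε N (⇑G) (k + (i + 1))
        = ((i : ℂ) + 1) * Vop a b ε N (⇑G) ((k + 1) + i) + Vop a b ε N (⇑G) ((k + 1) + i) := by
      intro i
      rw [show k + (i + 1) = (k + 1) + i by omega]; push_cast; ring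
    rw [tsum_congr e1, Summable.tsum_add (hs1 (k + 1)) (hs0 (k + 1))]
    congr 1
    simp
  have diffEq : ∀ k : ℕ, (G : ℕ → ℂ) k + (G : ℕ → ℂ) (k + 2) - 2 * (G : ℕ → ℂ) (k + 1)
      = -(Vop a b ε N (⇑G) k) := by
    intro k
    have e0 := hGv k
    have e1 := hGv (k + 1)
    have e2 := hGv (k + 2)
    have s0 := hS k
    have s1 := hS (k + 1)
    have r1 := hR (k + 1)
    rw [show k + 1 + 1 = k + 2 by omega] at s1 r1
    linear_combination e0 + e2 - 2 * e1 - s0 + s1 - r1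
  have hGlim : Tendsto (fun k => (G : ℕ → ℂ) k) atTop (nhds 1) := by
    rw [tendsto_iff_norm_sub_tendsto_zero]
    have hb : ∀ k : ℕ, ‖(G : ℕ → ℂ) k - 1‖ ≤ (∑' i : ℕ, q (k + i)) * ‖G‖ := by
      intro k
      have : (G : ℕ → ℂ) k - 1 = -(∑' i : ℕ, ((i : ℂ) + 1) * Vop a b ε N (⇑G) (k + i)) := by
        rw [hGv k]; ring
      rw [this, norm_neg]
      calc ‖∑' i : ℕ, ((i : ℂ) + 1) * Vop a b ε N (⇑G) (k + i)‖
          ≤ ∑' i : ℕ, ‖((i : ℂ) + 1) * Vop a b ε N (⇑G) (k + i)‖ :=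
            norm_tsum_le_tsum_norm (hsummC (⇑G) ‖G‖ hGM k)
        _ ≤ ∑' i : ℕ, ((i : ℝ) + 1) * W (k + i) * ‖G‖ :=
            Summable.tsum_le_tsum (htermC (⇑G) ‖G‖ hGM k) (hsummC (⇑G) ‖G‖ hGM k)
              ((htk k).mul_right ‖G‖)
        _ = (∑' i : ℕ, ((i : ℝ) + 1) * W (k + i)) * ‖G‖ := tsum_mul_right
        _ ≤ (∑' i : ℕ, q (k + i)) * ‖G‖ := by
            refine mul_le_mul_of_nonneg_right ?_ (norm_nonneg G)
            exact Summable.tsum_le_tsum (hterm0 k) (htk k) (hqshift k)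
    have hq0' : Tendsto (fun k => (∑' i : ℕ, q (k + i)) * ‖G‖) atTop (nhds 0) := by
      have h1 : Tendsto (fun k => ∑' i : ℕ, q (k + i)) atTop (nhds 0) :=
        (tendsto_sum_nat_add q).congr fun k => tsum_congr fun i : ℕ => congrArg q (by omega)
      simpa using h1.mul_const ‖G‖
    exact squeeze_zero (fun k => norm_nonneg _) hb hq0'
  -- construction of the solution
  have haext : ∀ k : ℤ, 0 < aext a k := by
    intro k; unfold aext; split
    · norm_num
    · exact ha _
  have haextne : ∀ k : ℤ, ((aext a k : ℝ) : ℂ) ≠ 0 := fun k => by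
    exact_mod_cast ne_of_gt (haext k)
  set g0 : ℂ := (ε : ℂ) ^ (N : ℤ) * (G : ℕ → ℂ) 0 with hg0
  set g1 : ℂ := (ε : ℂ) ^ ((N : ℤ) + 1) * (G : ℕ → ℂ) 1 with hg1
  set F : ℕ → ℂ := Fdown a b ε N g0 g1 with hFdef
  set f : ℤ → ℂ := fun m => if (N : ℤ) ≤ m then (ε : ℂ) ^ m * (G : ℕ → ℂ) (m - N).toNat
    else F ((N : ℤ) + 1 - m).toNat with hfdef
  have hfF : ∀ m : ℤ, m ≤ (N : ℤ) + 1 → f m = F ((N : ℤ) + 1 - m).toNat := by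
    intro m hm1
    by_cases hge : (N : ℤ) ≤ m
    · have hcase : m = (N : ℤ) ∨ m = (N : ℤ) + 1 := by omega
      rcases hcase with hNm | hNm
      · subst hNm
        simp only [hfdef]
        rw [if_pos le_rfl, show ((N : ℤ) - N).toNat = 0 by omega,
          show ((N : ℤ) + 1 - N).toNat = 1 by omega]
        rw [hFdef]
        rfl
      · subst hNm
        simp only [hfdef]
        rw [if_pos (by omega), show ((N : ℤ) + 1 - N).toNat = 1 by omega,
          show ((N : ℤ) + 1 - ((N : ℤ) + 1)).toNat = 0 by omega]
        rw [hFdef]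
        rfl
    · simp only [hfdef, if_neg hge]
  refine ⟨f, ?_, ?_⟩
  · intro n
    by_cases hn : (n : ℤ) ≤ (N : ℤ)
    · have hnN : n ≤ N := by exact_mod_cast hn
      have h1 : f ((n : ℤ) - 1) = F (N - n + 2) := by
        rw [hfF _ (by omega)]; congr 1; omega
      have h2 : f (n : ℤ) = F (N - n + 1) := by
        rw [hfF _ (by omega)]; congr 1; omega
      have h3 : f ((n : ℤ) + 1) = F (N - n) := by
        rw [hfF _ (by omega)]; congr 1; omega
      rw [h1, h2, h3]
      have hFdef2 : F (N - n + 2) = (((ε : ℂ) - (b (N - (N - n)) : ℂ)) * F (N - n + 1)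
          - (a (N - (N - n)) : ℂ) * F (N - n))
            / ((aext a ((N : ℤ) - (N - n : ℕ) - 1) : ℝ) : ℂ) := by
        rw [hFdef]
        rfl
      have hNn : N - (N - n) = n := by omega
      have hidx : (N : ℤ) - (N - n : ℕ) - 1 = (n : ℤ) - 1 := by omega
      rw [hNn, hidx] at hFdef2
      rw [hFdef2]
      have hne := haextne ((n : ℤ) - 1)
      field_simp
      ring
    · have hnN : N + 1 ≤ n := by omega
      set k : ℕ := n - (N + 1) with hk
      have h1 : f ((n : ℤ) - 1) = (ε : ℂ) ^ ((n : ℤ) - 1) * (G : ℕ → ℂ) k := by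
        simp only [hfdef]; rw [if_pos (by omega)]; congr 2; omega
      have h2 : f (n : ℤ) = (ε : ℂ) ^ (n : ℤ) * (G : ℕ → ℂ) (k + 1) := by
        simp only [hfdef]; rw [if_pos (by omega)]; congr 2; omega
      have h3 : f ((n : ℤ) + 1) = (ε : ℂ) ^ ((n : ℤ) + 1) * (G : ℕ → ℂ) (k + 2) := by
        simp only [hfdef]; rw [if_pos (by omega)]; congr 2; omega
      have haen : (aext a ((n : ℤ) - 1) : ℝ) = a (k + N) := by
        unfold aext; rw [if_neg (by omega)]; congr 1; omega
      have hbn : b n = b (k + N + 1) := by congr 1; omega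
      have han : a n = a (k + N + 1) := by congr 1; omega
      have hz1 : (ε : ℂ) ^ ((n : ℤ) - 1) = (ε : ℂ) ^ (n : ℤ) * (ε : ℂ) := by
        rw [zpow_sub_one₀ hεne, inv_eq_of_mul_eq_one_right hεC]
      have hz2 : (ε : ℂ) ^ ((n : ℤ) + 1) = (ε : ℂ) ^ (n : ℤ) * (ε : ℂ) := zpow_add_one₀ hεne _
      have dq := diffEq k
      unfold Vop at dq
      rw [h1, h2, h3, haen, hbn, han, hz1, hz2]
      linear_combination ((ε : ℂ) ^ (n : ℤ) * (ε : ℂ) / 2) * dq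
        - ((b (k + N + 1) : ℂ) * (ε : ℂ) ^ (n : ℤ) * (G : ℕ → ℂ) (k + 1)) * hεC
  · have hev : ∀ᶠ n : ℕ in atTop,
        (G : ℕ → ℂ) (n - N) = f (n : ℤ) * (ε : ℂ) ^ (-(n : ℤ)) := by
      filter_upwards [eventually_ge_atTop N] with n hn
      simp only [hfdef]
      rw [if_pos (by exact_mod_cast hn), show ((n : ℤ) - N).toNat = n - N by omega]
      rw [mul_comm ((ε : ℂ) ^ (n : ℤ)) _, mul_assoc, ← zpow_add₀ hεne,
        show (n : ℤ) + -(n : ℤ) = 0 by ring, zpow_zero, mul_one]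
    have hcomp : Tendsto (fun n : ℕ => (G : ℕ → ℂ) (n - N)) atTop (nhds 1) :=
      hGlim.comp (tendsto_sub_atTop_nat N)
    exact hcomp.congr' hev
end
end

section
/- Assume the first-moment condition ∑_{n≥0} (n+1)(|a_n - 1/2| + |b_n|) < ∞, and let ε ∈ {1, -1}. If u = (u_n)_{n≥-1} is a solution of the Jacobi equation at spectral parameter z = ε such that u_n → 0 as n → ∞, then u_n = 0 for all n. In particular, the points 1 and -1 cannot be eigenvalues of the Jacobi operator. -/
open Filter Finset MeasureTheory

set_option maxHeartbeats 1000000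

noncomputable section

lemma aext_pos (a : ℕ → ℝ) (ha : ∀ n, 0 < a n) (k : ℤ) : 0 < aext a k := by
  unfold aext; split
  · norm_num
  · exact ha _

lemma hVeq (a b : ℕ → ℝ) (u : ℤ → ℂ) (hu : IsJacobiSol a b 1 u) (n : ℕ) :
    u ((n:ℤ)+1) - 2 * u (n:ℤ) + u ((n:ℤ)-1) = -2 * jV a b u n := by
  have h := hu n
  simp only [jV]
  push_cast at h ⊢
  linear_combination 2 * h

lemma csummable (a b : ℕ → ℝ)
    (hm : Summable (fun n : ℕ => ((n : ℝ) + 1) * (|a n - 1/2| + |b n|))) :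
    Summable (fun k : ℕ => ((k:ℝ)+1) *
      (|aext a ((k:ℤ)-1) - 1/2| + |b k| + |a k - 1/2|)) := by
  have hsub : Summable (fun k : ℕ => ((k:ℝ)+1) * |aext a ((k:ℤ)-1) - 1/2|) := by
    have h2 : Summable (fun k : ℕ => 2 * (((k:ℝ)+1) * (|a k - 1/2| + |b k|))) := hm.mul_left 2
    rw [← summable_nat_add_iff 1]
    refine h2.of_nonneg_of_le (fun k => by positivity) (fun k => ?_)
    have h1 : ((k+1:ℕ):ℤ) - 1 = (k:ℤ) := by push_cast; ring
    rw [h1, aext_natCast]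
    push_cast
    nlinarith [abs_nonneg (a k - 1/2), abs_nonneg (b k), Nat.cast_nonneg (α := ℝ) k]
  apply ((hsub.add hm).congr)
  intro k; ring

lemma Cbound (u : ℤ → ℂ) (hdecay : Tendsto (fun n : ℕ => u (n : ℤ)) atTop (nhds 0)) :
    ∃ C : ℝ, 0 ≤ C ∧ ∀ i : ℤ, -1 ≤ i → ‖u i‖ ≤ C := by
  have h1 : Tendsto (fun n : ℕ => ‖u (n:ℤ)‖) atTop (nhds 0) := by
    simpa using hdecay.norm
  obtain ⟨C0, hC0⟩ := h1.bddAbove_range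
  refine ⟨max C0 ‖u (-1)‖, le_max_of_le_right (norm_nonneg _), ?_⟩
  intro i hi
  rcases eq_or_lt_of_le hi with h | h
  · rw [← h]; exact le_max_right _ _
  · have h0 : 0 ≤ i := by omega
    have : i = ((i.toNat : ℕ) : ℤ) := (Int.toNat_of_nonneg h0).symm
    rw [this]
    exact le_max_of_le_left (hC0 (Set.mem_range_self _))

lemma Vbound (a b : ℕ → ℝ) (u : ℤ → ℂ) (k : ℕ) (D : ℝ)
    (hD : ∀ i : ℤ, (k:ℤ)-1 ≤ i → ‖u i‖ ≤ D) :
    ‖jV a b u k‖ ≤ (|aext a ((k:ℤ)-1) - 1/2| + |b k| + |a k - 1/2|) * D := by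
  have h1 : ‖u ((k:ℤ)-1)‖ ≤ D := hD _ le_rfl
  have h2 : ‖u (k:ℤ)‖ ≤ D := hD _ (by omega)
  have h3 : ‖u ((k:ℤ)+1)‖ ≤ D := hD _ (by omega)
  have hterm : ∀ (r : ℝ) (j : ℤ), ‖u j‖ ≤ D → ‖((r : ℝ) : ℂ) * u j‖ ≤ |r| * D := by
    intro r j hj
    rw [norm_mul, Complex.norm_real]
    exact mul_le_mul_of_nonneg_left hj (abs_nonneg r)
  calc ‖jV a b u k‖ ≤ ‖((aext a ((k:ℤ)-1) - 1/2 : ℝ) : ℂ) * u ((k:ℤ)-1)‖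
        + ‖((b k : ℝ) : ℂ) * u (k:ℤ)‖ + ‖((a k - 1/2 : ℝ) : ℂ) * u ((k:ℤ)+1)‖ :=
      norm_add₃_le
    _ ≤ |aext a ((k:ℤ)-1) - 1/2| * D + |b k| * D + |a k - 1/2| * D := by
      gcongr ?_ + ?_ + ?_
      · exact hterm _ _ h1
      · exact hterm _ _ h2
      · exact hterm _ _ h3
    _ = _ := by ring

lemma key (a b : ℕ → ℝ) (ha : ∀ n, 0 < a n)
    (hm : Summable (fun n : ℕ => ((n : ℝ) + 1) * (|a n - 1/2| + |b n|)))
    (u : ℤ → ℂ) (hu : IsJacobiSol a b 1 u)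
    (hdecay : Tendsto (fun n : ℕ => u (n : ℤ)) atTop (nhds 0)) :
    ∀ n : ℤ, -1 ≤ n → u n = 0 := by
  obtain ⟨C, hC0, hCb⟩ := Cbound u hdecay
  set c : ℕ → ℝ := fun k => |aext a ((k:ℤ)-1) - 1/2| + |b k| + |a k - 1/2| with hc
  have hcnn : ∀ k, 0 ≤ c k := fun k => by positivity
  have hGsum : Summable (fun k : ℕ => ((k:ℝ)+1) * c k) := csummable a b hm
  have hcsum : Summable c := by
    refine hGsum.of_nonneg_of_le hcnn (fun k => ?_)
    exact le_mul_of_one_le_left (hcnn k) (by linarith [Nat.cast_nonneg (α := ℝ) k])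
  set V : ℕ → ℂ := jV a b u with hV
  have hVle : ∀ k, ‖V k‖ ≤ c k * C := fun k =>
    Vbound a b u k C (fun i hi => hCb i (by omega))
  have hVnsum : Summable (fun k => ‖V k‖) :=
    (hcsum.mul_right C).of_nonneg_of_le (fun k => norm_nonneg _) hVle
  have hVsum : Summable V := hVnsum.of_norm
  set g : ℕ → ℝ := fun k => ((k:ℝ)+1) * ‖V k‖ with hg
  have hgsum : Summable g := by
    refine (hGsum.mul_right C).of_nonneg_of_le (fun k => by positivity) (fun k => ?_)
    calc ((k:ℝ)+1) * ‖V k‖ ≤ ((k:ℝ)+1) * (c k * C) := by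
          have : (0:ℝ) ≤ (k:ℝ)+1 := by positivity
          exact mul_le_mul_of_nonneg_left (hVle k) this
      _ = (((k:ℝ)+1) * c k) * C := by ring
  set D : ℕ → ℂ := fun n => u ((n:ℤ)+1) - u (n:ℤ) with hD
  have hDstep : ∀ n : ℕ, D (n+1) - D n = -2 * V (n+1) := by
    intro n
    have h := hVeq a b u hu (n+1)
    have e : ((n+1:ℕ):ℤ) = (n:ℤ)+1 := by push_cast; ring
    rw [e] at h
    have e2 : (n:ℤ)+1-1 = (n:ℤ) := by ring
    rw [e2] at h
    simp only [hD, hV, e]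
    linear_combination h
  have hDK : ∀ n : ℕ, D n = (u 0 - u (-1)) - 2 * ∑ k ∈ range (n+1), V k := by
    intro n
    induction n with
    | zero =>
      have h := hVeq a b u hu 0
      rw [show ((0:ℕ):ℤ) = 0 by simp] at h
      rw [show (0:ℤ)+1 = 1 by ring, show (0:ℤ)-1 = -1 by ring] at h
      simp only [hD, hV, zero_add, Finset.sum_range_one]
      rw [show ((0:ℕ):ℤ) = 0 by simp, show (0:ℤ)+1 = 1 by ring]
      linear_combination h
    | succ n ih =>
      rw [Finset.sum_range_succ]
      have hs := hDstep n
      linear_combination hs + ih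
  have t1 : Tendsto (fun n : ℕ => u ((n:ℤ)+1)) atTop (nhds 0) := by
    have h := hdecay.comp (tendsto_add_atTop_nat 1)
    refine h.congr (fun n => ?_)
    simp only [Function.comp]
    norm_cast
  have hD0 : Tendsto D atTop (nhds 0) := by
    have := t1.sub hdecay
    simpa using this
  set S : ℂ := ∑' k, V k with hS
  have hpart : Tendsto (fun n : ℕ => ∑ k ∈ range (n+1), V k) atTop (nhds S) :=
    hVsum.hasSum.tendsto_sum_nat.comp (tendsto_add_atTop_nat 1)
  have hK : u 0 - u (-1) = 2 * S := by
    have h2 : Tendsto D atTop (nhds ((u 0 - u (-1)) - 2 * S)) := by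
      have h3 := (tendsto_const_nhds (x := u 0 - u (-1)) (f := atTop)).sub (hpart.const_mul 2)
      exact h3.congr (fun n => (hDK n).symm)
    have h3 := tendsto_nhds_unique h2 hD0
    linear_combination h3
  have hDtail : ∀ n : ℕ, D n = 2 * ∑' k, V (k + (n+1)) := by
    intro n
    have h2 := Summable.sum_add_tsum_nat_add (f := V) (n+1) hVsum
    rw [hDK n, hK]
    linear_combination -2 * h2
  have est1 : ∀ m N : ℕ, m ≤ N →
      ‖((N:ℂ)+1-(m:ℂ)) * D N‖ ≤ 2 * ∑' k, g (k + (N+1)) := by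
    intro m N hmN
    have hmN' : (m:ℝ) ≤ (N:ℝ) := Nat.cast_le.2 hmN
    have hcoef : ‖(N:ℂ)+1-(m:ℂ)‖ = (N:ℝ)+1-(m:ℝ) := by
      rw [show (N:ℂ)+1-(m:ℂ) = (((N:ℝ)+1-(m:ℝ) : ℝ) : ℂ) by push_cast; ring,
        Complex.norm_real, Real.norm_eq_abs, abs_of_nonneg (by linarith)]
    have hVnshift : Summable (fun k => ‖V (k + (N+1))‖) := (summable_nat_add_iff _).2 hVnsum
    have hgshift : Summable (fun k => g (k + (N+1))) := (summable_nat_add_iff _).2 hgsum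
    have h3 : ‖∑' k, V (k+(N+1))‖ ≤ ∑' k, ‖V (k+(N+1))‖ := norm_tsum_le_tsum_norm hVnshift
    have h4 : ((N:ℝ)+1-(m:ℝ)) * ∑' k, ‖V (k+(N+1))‖ ≤ ∑' k, g (k + (N+1)) := by
      rw [← tsum_mul_left]
      refine Summable.tsum_le_tsum (fun k => ?_) (hVnshift.mul_left _) hgshift
      simp only [hg]
      have hle : (N:ℝ)+1-(m:ℝ) ≤ ((k+(N+1):ℕ):ℝ)+1 := by push_cast; linarith [Nat.cast_nonneg (α := ℝ) k]
      exact mul_le_mul_of_nonneg_right hle (norm_nonneg _)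
    rw [hDtail N, norm_mul, hcoef, norm_mul]
    have h5 : ‖(2:ℂ)‖ = 2 := by norm_num
    rw [h5]
    calc ((N:ℝ)+1-(m:ℝ)) * (2 * ‖∑' k, V (k+(N+1))‖)
        = 2 * (((N:ℝ)+1-(m:ℝ)) * ‖∑' k, V (k+(N+1))‖) := by ring
      _ ≤ 2 * (((N:ℝ)+1-(m:ℝ)) * ∑' k, ‖V (k+(N+1))‖) := by
          have h6 : (0:ℝ) ≤ (N:ℝ)+1-(m:ℝ) := by linarith
          nlinarith [h3, h6]
      _ ≤ 2 * ∑' k, g (k + (N+1)) := by linarith [h4]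
  have hID : ∀ m N : ℕ, m ≤ N → u (m:ℤ) = u ((N:ℤ)+1) - ((N:ℂ)+1-(m:ℂ)) * D N
      - 2 * ∑ k ∈ Icc (m+1) N, ((k:ℂ)-(m:ℂ)) * V k := by
    intro m
    refine Nat.le_induction ?_ ?_
    · rw [Finset.Icc_eq_empty (by omega), Finset.sum_empty]
      simp only [hD]
      ring
    · intro N hmN ih
      rw [Finset.sum_Icc_succ_top (by omega : m+1 ≤ N+1)]
      have hs := hDstep N
      simp only [hD, hV] at hs ih ⊢
      push_cast at hs ih ⊢
      linear_combination ih + ((N:ℂ)+1-(m:ℂ)) * hs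
  set G : ℕ → ℝ := fun k => ((k:ℝ)+1) * c k with hGdef
  set TailG : ℕ → ℝ := fun p => ∑' k, G (k + p) with hTG
  have hGshift : ∀ p : ℕ, Summable (fun k => G (k + p)) :=
    fun p => (summable_nat_add_iff p).2 hGsum
  have main_est : ∀ (m : ℕ) (B : ℝ), 0 ≤ B → (∀ i : ℤ, (m:ℤ) ≤ i → ‖u i‖ ≤ B) →
      ‖u (m:ℤ)‖ ≤ 2 * (TailG (m+1) * B) := by
    intro m B hB0 hB
    have hTGnn : 0 ≤ TailG (m+1) := tsum_nonneg (fun k => by positivity)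
    have hFb : ∀ N : ℕ, m ≤ N →
        ‖∑ k ∈ Icc (m+1) N, ((k:ℂ)-(m:ℂ)) * V k‖ ≤ TailG (m+1) * B := by
      intro N hmN
      calc ‖∑ k ∈ Icc (m+1) N, ((k:ℂ)-(m:ℂ)) * V k‖
          ≤ ∑ k ∈ Icc (m+1) N, ‖((k:ℂ)-(m:ℂ)) * V k‖ := norm_sum_le _ _
        _ ≤ ∑ k ∈ Icc (m+1) N, G k * B := by
            refine Finset.sum_le_sum (fun k hk => ?_)
            rw [Finset.mem_Icc] at hk
            have hk1 : m + 1 ≤ k := hk.1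
            have hkr : (m:ℝ) + 1 ≤ (k:ℝ) := by exact_mod_cast hk1
            rw [norm_mul]
            have h1 : ‖(k:ℂ)-(m:ℂ)‖ = (k:ℝ)-(m:ℝ) := by
              rw [show (k:ℂ)-(m:ℂ) = (((k:ℝ)-(m:ℝ) : ℝ) : ℂ) by push_cast; ring,
                Complex.norm_real, Real.norm_eq_abs, abs_of_nonneg (by linarith)]
            have h2 : ‖V k‖ ≤ c k * B := Vbound a b u k B (fun i hi => hB i (by omega))
            rw [h1]
            calc ((k:ℝ)-(m:ℝ)) * ‖V k‖ ≤ ((k:ℝ)+1) * (c k * B) := by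
                  refine mul_le_mul (by linarith [Nat.cast_nonneg (α := ℝ) m]) h2
                    (norm_nonneg _) (by positivity)
              _ = G k * B := by rw [hGdef]; ring
        _ = (∑ k ∈ Icc (m+1) N, G k) * B := by rw [Finset.sum_mul]
        _ ≤ TailG (m+1) * B := by
            refine mul_le_mul_of_nonneg_right ?_ hB0
            rw [← Finset.Ico_add_one_right_eq_Icc, Finset.sum_Ico_eq_sum_range]
            have e : ∀ i ∈ range (N + 1 - (m+1)), G ((m+1) + i) = G (i + (m+1)) :=
              fun i _ => by rw [Nat.add_comm]
            rw [Finset.sum_congr rfl e]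
            exact Summable.sum_le_tsum _ (fun i _ => by positivity) (hGshift (m+1))
    have t2 : Tendsto (fun N : ℕ => ((N:ℂ)+1-(m:ℂ)) * D N) atTop (nhds 0) := by
      have h7 : Tendsto (fun p : ℕ => ∑' k, g (k + p)) atTop (nhds 0) :=
        tendsto_sum_nat_add g
      have h8 : Tendsto (fun N : ℕ => 2 * ∑' k, g (k + (N+1))) atTop (nhds 0) := by
        have h9 := (h7.comp (tendsto_add_atTop_nat 1)).const_mul (2:ℝ)
        simpa [Function.comp] using h9
      refine squeeze_zero_norm' ?_ h8
      filter_upwards [eventually_ge_atTop m] with N hN using est1 m N hN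
    have t3 : Tendsto (fun N : ℕ => ‖u ((N:ℤ)+1)‖ + ‖((N:ℂ)+1-(m:ℂ)) * D N‖
        + 2 * (TailG (m+1) * B)) atTop (nhds (0 + 0 + 2 * (TailG (m+1) * B))) := by
      have n1 : Tendsto (fun N : ℕ => ‖u ((N:ℤ)+1)‖) atTop (nhds 0) := by
        simpa using t1.norm
      have n2 : Tendsto (fun N : ℕ => ‖((N:ℂ)+1-(m:ℂ)) * D N‖) atTop (nhds 0) := by
        simpa using t2.norm
      exact (n1.add n2).add tendsto_const_nhds
    have t4 : ‖u (m:ℤ)‖ ≤ 0 + 0 + 2 * (TailG (m+1) * B) := by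
      refine ge_of_tendsto t3 ?_
      filter_upwards [eventually_ge_atTop m] with N hN
      rw [hID m N hN]
      calc ‖u ((N:ℤ)+1) - ((N:ℂ)+1-(m:ℂ)) * D N
            - 2 * ∑ k ∈ Icc (m+1) N, ((k:ℂ)-(m:ℂ)) * V k‖
          ≤ ‖u ((N:ℤ)+1) - ((N:ℂ)+1-(m:ℂ)) * D N‖
            + ‖2 * ∑ k ∈ Icc (m+1) N, ((k:ℂ)-(m:ℂ)) * V k‖ := norm_sub_le _ _
        _ ≤ ‖u ((N:ℤ)+1)‖ + ‖((N:ℂ)+1-(m:ℂ)) * D N‖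
            + 2 * (TailG (m+1) * B) := by
            have h9 : ‖(2:ℂ) * ∑ k ∈ Icc (m+1) N, ((k:ℂ)-(m:ℂ)) * V k‖
                ≤ 2 * (TailG (m+1) * B) := by
              rw [norm_mul, show ‖(2:ℂ)‖ = 2 by norm_num]
              exact mul_le_mul_of_nonneg_left (hFb N hN) (by norm_num)
            have h10 := norm_sub_le (u ((N:ℤ)+1)) (((N:ℂ)+1-(m:ℂ)) * D N)
            linarith
    linarith
  have htail0 : Tendsto TailG atTop (nhds 0) := tendsto_sum_nat_add G
  obtain ⟨m₀, hm₀⟩ := eventually_atTop.1 (htail0.eventually_lt_const (by norm_num : (0:ℝ) < 1/4))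
  have hbdd : BddAbove (Set.range fun i : ℕ => ‖u ((m₀ + i : ℕ) : ℤ)‖) := by
    have h0 : Tendsto (fun n : ℕ => ‖u (n:ℤ)‖) atTop (nhds 0) := by simpa using hdecay.norm
    have h1 := h0.comp (tendsto_add_atTop_nat m₀)
    have h2 : Tendsto (fun i : ℕ => ‖u ((m₀ + i : ℕ) : ℤ)‖) atTop (nhds 0) := by
      refine h1.congr (fun i => ?_)
      simp only [Function.comp]
      rw [Nat.add_comm]
    exact h2.bddAbove_range
  set B : ℝ := ⨆ i : ℕ, ‖u ((m₀ + i : ℕ) : ℤ)‖ with hBdef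
  have hB0 : 0 ≤ B := le_trans (norm_nonneg _) (le_ciSup hbdd 0)
  have hBb : ∀ i : ℤ, (m₀:ℤ) ≤ i → ‖u i‖ ≤ B := by
    intro i hi
    have e : i = ((m₀ + (i - m₀).toNat : ℕ) : ℤ) := by
      push_cast
      rw [Int.toNat_of_nonneg (by omega)]
      ring
    rw [e]
    exact le_ciSup hbdd _
  have hhalf : ∀ i : ℕ, ‖u ((m₀ + i : ℕ) : ℤ)‖ ≤ (1/2) * B := by
    intro i
    have h1 := main_est (m₀ + i) B hB0 (fun j hj => hBb j (by push_cast at hj ⊢; omega))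
    have h2 : TailG (m₀ + i + 1) ≤ 1/4 := le_of_lt (hm₀ _ (by omega))
    have h3 : 0 ≤ TailG (m₀ + i + 1) := tsum_nonneg (fun k => by positivity)
    have h4 : TailG (m₀ + i + 1) * B ≤ (1/4) * B := mul_le_mul_of_nonneg_right h2 hB0
    linarith
  have hBz : B = 0 := by
    have h1 : B ≤ (1/2) * B := ciSup_le hhalf
    linarith
  have hzero : ∀ i : ℤ, (m₀:ℤ) ≤ i → u i = 0 := by
    intro i hi
    have := hBb i hi
    rw [hBz] at this
    exact norm_le_zero_iff.1 this
  have hback : ∀ k : ℕ, k ≤ m₀ + 1 → u ((m₀:ℤ) - k) = 0 ∧ u ((m₀:ℤ) - k + 1) = 0 := by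
    intro k
    induction k with
    | zero =>
      intro _
      constructor
      · exact hzero _ (by omega)
      · exact hzero _ (by omega)
    | succ k ih =>
      intro hk
      obtain ⟨h1, h2⟩ := ih (by omega)
      have hkm : k ≤ m₀ := by omega
      have h := hu (m₀ - k)
      have e : ((m₀ - k : ℕ) : ℤ) = (m₀:ℤ) - k := by omega
      rw [e] at h
      have e2 : (m₀:ℤ) - k + 1 = (m₀:ℤ) - k + 1 := rfl
      rw [h1, h2] at h
      simp only [mul_zero, add_zero, zero_add, mul_one] at h
      have hne : ((aext a ((m₀:ℤ) - k - 1) : ℝ) : ℂ) ≠ 0 :=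
        Complex.ofReal_ne_zero.2 (ne_of_gt (aext_pos a ha _))
      have h3 : u ((m₀:ℤ) - k - 1) = 0 := by
        rcases mul_eq_zero.1 h with h4 | h4
        · exact absurd h4 hne
        · exact h4
      constructor
      · rw [show (m₀:ℤ) - (k+1 : ℕ) = (m₀:ℤ) - k - 1 by push_cast; ring]
        exact h3
      · rw [show (m₀:ℤ) - (k+1 : ℕ) + 1 = (m₀:ℤ) - k by push_cast; ring]
        exact h1
  intro n hn
  by_cases hcase : (m₀:ℤ) ≤ n
  · exact hzero n hcase
  · push_neg at hcase
    have hkle : (m₀ - n).toNat ≤ m₀ + 1 := by omega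
    have h := (hback _ hkle).1
    rw [show (m₀:ℤ) - ((m₀ - n).toNat : ℤ) = n by omega] at h
    exact h

/-- under the first-moment condition the Jacobi equation at `z = ±1`
has no nontrivial solution tending to zero; in particular `±1` are not eigenvalues. -/
theorem no_edge_eigenvalues
    (a b : ℕ → ℝ) (ha : ∀ n, 0 < a n)
    (hm : Summable (fun n : ℕ => ((n : ℝ) + 1) * (|a n - 1/2| + |b n|)))
    (ε : ℝ) (hε : ε = 1 ∨ ε = -1)
    (u : ℤ → ℂ) (hu : IsJacobiSol a b (ε : ℂ) u)
    (hdecay : Filter.Tendsto (fun n : ℕ => u (n : ℤ)) Filter.atTop (nhds 0)) :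
    ∀ n : ℤ, -1 ≤ n → u n = 0 := by
  rcases hε with h1 | h1
  · subst h1
    rw [show ((1:ℝ):ℂ) = 1 by norm_num] at hu
    exact key a b ha hm u hu hdecay
  · subst h1
    set v : ℤ → ℂ := fun k => (-1:ℂ)^k * u k with hv
    have hne : (-1:ℂ) ≠ 0 := by norm_num
    have hv_sol : IsJacobiSol a (fun n => -b n) 1 v := by
      intro n
      have h := hu n
      have e1 : (-1:ℂ)^((n:ℤ)-1) = -(-1:ℂ)^(n:ℤ) := by
        rw [zpow_sub₀ hne, zpow_one, div_neg, div_one]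
      have e2 : (-1:ℂ)^((n:ℤ)+1) = -(-1:ℂ)^(n:ℤ) := by
        rw [zpow_add₀ hne]
        simp
      simp only [hv]
      rw [e1, e2]
      push_cast at h ⊢
      linear_combination (-(-1:ℂ)^(n:ℤ)) * h
    have hm' : Summable (fun n : ℕ => ((n:ℝ)+1) * (|a n - 1/2| + |(fun n => -b n) n|)) := by
      simpa [abs_neg] using hm
    have hv_dec : Tendsto (fun n : ℕ => v (n:ℤ)) atTop (nhds 0) := by
      rw [tendsto_zero_iff_norm_tendsto_zero]
      have he : ∀ n : ℕ, ‖u (n:ℤ)‖ = ‖v (n:ℤ)‖ := by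
        intro n
        simp [hv, norm_mul, norm_zpow]
      refine Tendsto.congr he ?_
      simpa using hdecay.norm
    have hz := key a (fun n => -b n) ha hm' v hv_sol hv_dec
    intro n hn
    have h2 := hz n hn
    simp only [hv] at h2
    rcases mul_eq_zero.1 h2 with h3 | h3
    · exact absurd h3 (zpow_ne_zero _ hne)
    · exact h3
end
end

section
/- Assume the first-moment condition ∑_{n≥0} (n+1)(|a_n - 1/2| + |b_n|) < ∞, and let ε ∈ {1, -1}. Suppose Ω(ε) = 1 - 2 ∑_{n=0}^{∞} ε^{n+1} (VP(ε))_n = 0 (a resonance at z = ε). Then the sequence εⁿ P_n(ε) converges as n → ∞ to γ_ε = 1 + 2 ∑_{m=0}^{∞} ε^{m-1} m (VP(ε))_m, and γ_ε ≠ 0. -/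
open Filter Finset MeasureTheory

noncomputable section

/-! ### Auxiliary material -/

section tails
variable (F : ℕ → ℝ)

/-- tail sum from `N+1` on -/
def tl (N : ℕ) : ℝ := ∑' i : ℕ, F (N+1+i)

lemma summable_shift (hf : Summable F) (N : ℕ) : Summable (fun i => F (N+i)) := by
  have := (summable_nat_add_iff (f := F) N).2 hf
  exact this.congr (fun i => by rw [add_comm])

lemma tl_nonneg (hnn : ∀ k, 0 ≤ F k) (N : ℕ) : 0 ≤ tl F N :=
  tsum_nonneg (fun i => hnn _)

lemma tl_succ (hf : Summable F) (N : ℕ) : tl F N = F (N+1) + tl F (N+1) := by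
  unfold tl
  rw [Summable.tsum_eq_zero_add (summable_shift F hf (N+1))]
  congr 1
  exact tsum_congr fun b => by congr 1; omega

lemma tl_anti (hnn : ∀ k, 0 ≤ F k) (hf : Summable F) {N M : ℕ} (h : N ≤ M) :
    tl F M ≤ tl F N := by
  induction M, h using Nat.le_induction with
  | base => exact le_refl _
  | succ m hm ih =>
    refine le_trans ?_ ih
    rw [tl_succ F hf m]
    have := hnn (m+1)
    have := tl_nonneg F hnn (m+1)
    linarith

lemma term_le_tl (hnn : ∀ k, 0 ≤ F k) (hf : Summable F) {N k : ℕ} (h : N + 1 ≤ k) :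
    F k ≤ tl F N := by
  have : F k = F (N+1+(k-N-1)) := by congr 1; omega
  rw [this]
  exact Summable.le_tsum (summable_shift F hf (N+1)) _ (fun j _ => hnn _)

lemma sum_Ico_le_tl (hnn : ∀ k, 0 ≤ F k) (hf : Summable F) (N m : ℕ) :
    ∑ k ∈ Ico (N+1) m, F k ≤ tl F N := by
  rw [Finset.sum_Ico_eq_sum_range]
  exact Summable.sum_le_tsum _ (fun i _ => hnn _) (summable_shift F hf (N+1))

lemma tl_tendsto (hf : Summable F) : Tendsto (fun n => tl F n) atTop (nhds 0) := by
  have h1 := tendsto_sum_nat_add F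
  have h2 : Tendsto (fun n : ℕ => n + 1) atTop atTop := tendsto_add_atTop_nat 1
  have h3 := h1.comp h2
  apply h3.congr
  intro n
  exact tsum_congr fun i => by simp only [Function.comp]; congr 1; omega

end tails

section wtails
variable (f : ℕ → ℝ)

/-- weighted tail `∑_{k>N} (k-N) f k` -/
def wtl (N : ℕ) : ℝ := ∑' i : ℕ, ((i:ℝ)+1) * f (N+1+i)

/-- weight `k+4` -/
def wt (f : ℕ → ℝ) : ℕ → ℝ := fun k => ((k:ℝ)+4) * f k

variable (hnn : ∀ k, 0 ≤ f k) (hf : Summable (wt f))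

include hnn hf

lemma summable_base : Summable f := by
  apply Summable.of_nonneg_of_le hnn _ hf
  intro k
  have := hnn k
  unfold wt
  nlinarith [Nat.cast_nonneg (α := ℝ) k]

lemma summable_wshift (N : ℕ) : Summable (fun i : ℕ => ((i:ℝ)+1) * f (N+1+i)) := by
  apply Summable.of_nonneg_of_le (fun i => by have := hnn (N+1+i); positivity) _
    (summable_shift _ hf (N+1))
  intro i
  have h0 := hnn (N+1+i)
  unfold wt
  push_cast
  nlinarith [Nat.cast_nonneg (α := ℝ) N, Nat.cast_nonneg (α := ℝ) i]

lemma wtl_le_tl (N : ℕ) : wtl f N ≤ tl (wt f) N := by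
  apply Summable.tsum_le_tsum _ (summable_wshift f hnn hf N) (summable_shift _ hf (N+1))
  intro i
  have h0 := hnn (N+1+i)
  unfold wt
  push_cast
  nlinarith [Nat.cast_nonneg (α := ℝ) N, Nat.cast_nonneg (α := ℝ) i]

lemma wtl_succ (N : ℕ) : wtl f N = tl f N + wtl f (N+1) := by
  unfold wtl tl
  have hs1 : Summable (fun i => f (N+1+i)) := summable_shift _ (summable_base f hnn hf) (N+1)
  have hs2 : Summable (fun i : ℕ => (i:ℝ) * f (N+1+i)) := by
    apply Summable.of_nonneg_of_le (fun i => by have := hnn (N+1+i); positivity) _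
      (summable_shift _ hf (N+1))
    intro i
    have h0 := hnn (N+1+i)
    unfold wt
    push_cast
    nlinarith [Nat.cast_nonneg (α := ℝ) N, Nat.cast_nonneg (α := ℝ) i]
  have he : (fun i : ℕ => ((i:ℝ)+1) * f (N+1+i)) = fun i => f (N+1+i) + (i:ℝ) * f (N+1+i) := by
    funext i; ring
  rw [he, Summable.tsum_add hs1 hs2]
  congr 1
  rw [Summable.tsum_eq_zero_add hs2]
  simp only [Nat.cast_zero, zero_mul, zero_add]
  apply tsum_congr
  intro i
  have he2 : N+1+(i+1) = N+1+1+i := by omega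
  rw [he2]
  push_cast
  ring

omit hf in
lemma wtl_nonneg (m : ℕ) : 0 ≤ wtl f m :=
  tsum_nonneg (fun i => by have := hnn (m+1+i); positivity)

lemma sum_tl_eq (Nb m : ℕ) (h : Nb ≤ m) :
    ∑ j ∈ Ico Nb m, tl f j + wtl f m = wtl f Nb := by
  induction m, h using Nat.le_induction with
  | base => simp
  | succ m hm ih =>
    have hw := wtl_succ f hnn hf m
    rw [Finset.sum_Ico_succ_top hm]
    linarith

lemma sum_tl_le (Nb m : ℕ) (h : Nb ≤ m) :
    ∑ j ∈ Ico Nb m, tl f j ≤ tl (wt f) Nb := by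
  have h1 := sum_tl_eq f hnn hf Nb m h
  have h2 := wtl_nonneg f hnn m
  have h3 := wtl_le_tl f hnn hf Nb
  linarith

end wtails

section jacobi
variable (a b : ℕ → ℝ) (ε : ℝ) (P : ℤ → ℂ)

/-- three-term local size of the perturbation -/
def vv (k : ℕ) : ℝ := |aext a ((k:ℤ)-1) - 1/2| + |b k| + |a k - 1/2|

/-- `εⁿ Pₙ` -/
def qq (n : ℕ) : ℂ := (ε:ℂ)^(n:ℕ) * P (n:ℤ)

/-- `-2 ε^{n+1} (VP)ₙ` -/
def cc (n : ℕ) : ℂ := -2 * (ε:ℂ)^(n+1) * jV a b P n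

lemma vv_nonneg (k : ℕ) : 0 ≤ vv a b k := by
  unfold vv; positivity

lemma summable_wt_vv
    (hm : Summable (fun n : ℕ => ((n : ℝ) + 1) * (|a n - 1/2| + |b n|))) :
    Summable (wt (vv a b)) := by
  have hw : Summable (fun n : ℕ => 5*(((n : ℝ) + 1) * (|a n - 1/2| + |b n|))) := hm.mul_left 5
  have h1 : Summable (fun k : ℕ => ((k:ℝ)+4) * (|b k| + |a k - 1/2|)) := by
    apply Summable.of_nonneg_of_le (fun k => by positivity) _ hw
    intro k
    have h4 : ((k:ℝ)+4) ≤ 5*((k:ℝ)+1) := by nlinarith [Nat.cast_nonneg (α := ℝ) k]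
    have h5 : (0:ℝ) ≤ |b k| + |a k - 1/2| := by positivity
    nlinarith
  have h2 : Summable (fun k : ℕ => ((k:ℝ)+4) * |aext a ((k:ℤ)-1) - 1/2|) := by
    rw [← summable_nat_add_iff 1]
    apply Summable.of_nonneg_of_le (fun k => by positivity) _ hw
    intro k
    have he : aext a (((k+1:ℕ):ℤ)-1) = a k := by unfold aext; simp
    rw [he]
    have h5 : (0:ℝ) ≤ |a k - 1/2| := abs_nonneg _
    have h6 : (0:ℝ) ≤ |b k| := abs_nonneg _
    push_cast
    nlinarith [Nat.cast_nonneg (α := ℝ) k]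
  have := h2.add h1
  apply this.congr
  intro k
  unfold wt vv
  ring

lemma key_identity (z : ℂ) (hP : IsJacobiSol a b z P) (n : ℕ) :
    P ((n:ℤ)+1) + P ((n:ℤ)-1) = 2*z*P n - 2 * jV a b P n := by
  have h := hP n
  unfold jV
  push_cast
  linear_combination 2*h

lemma d_formula (hε2 : (ε:ℂ)^2 = 1) (hP : IsJacobiSol a b (ε:ℂ) P)
    (hPm : P (-1) = 0) (hP0 : P 0 = 1) (n : ℕ) :
    qq ε P (n+1) - qq ε P n = 1 + ∑ k ∈ range (n+1), cc a b ε P k := by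
  induction n with
  | zero =>
    have h := key_identity a b P (ε:ℂ) hP 0
    have h0 : ((0:ℕ):ℤ) + 1 = 1 := by norm_num
    have h1 : ((0:ℕ):ℤ) - 1 = -1 := by norm_num
    have h2 : ((0:ℕ):ℤ) = 0 := by norm_num
    rw [h0, h1, h2, hPm, hP0] at h
    rw [zero_add, Finset.sum_range_one]
    unfold qq cc
    push_cast
    rw [hP0]
    linear_combination (ε:ℂ) * h + 2*hε2
  | succ m ih =>
    have h := key_identity a b P (ε:ℂ) hP (m+1)
    have hc1 : ((m+1:ℕ):ℤ)+1 = ((m+2:ℕ):ℤ) := by push_cast; ring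
    have hc2 : ((m+1:ℕ):ℤ)-1 = ((m:ℕ):ℤ) := by push_cast; ring
    rw [hc1, hc2] at h
    rw [Finset.sum_range_succ]
    unfold qq cc at *
    have hpow : ∀ j : ℕ, (ε:ℂ)^(j+2) = (ε:ℂ)^j := by
      intro j; rw [pow_add, hε2, mul_one]
    linear_combination ih + (ε:ℂ)^(m+2) * h + (P ((m:ℕ):ℤ) - 2*(ε:ℂ)*P ((m+1:ℕ):ℤ)) * (hpow m)
      + (4*(ε:ℂ)^(m+1)*P ((m+1:ℕ):ℤ) - 2*(ε:ℂ)^m*P ((m:ℕ):ℤ)) * hε2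

lemma norm_qq (hε1 : ‖(ε:ℂ)‖ = 1) (n : ℕ) : ‖qq ε P n‖ = ‖P (n:ℤ)‖ := by
  unfold qq; rw [norm_mul, norm_pow, hε1, one_pow, one_mul]

lemma norm_cc_le (hε1 : ‖(ε:ℂ)‖ = 1) (n : ℕ) :
    ‖cc a b ε P n‖ ≤ 2 * vv a b n * (‖P ((n:ℤ)-1)‖ + ‖qq ε P n‖ + ‖qq ε P (n+1)‖) := by
  rw [norm_qq ε P hε1, norm_qq ε P hε1]
  have hc : ((n+1:ℕ):ℤ) = (n:ℤ)+1 := by push_cast; ring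
  rw [hc]
  unfold cc vv
  rw [norm_mul, norm_mul, norm_pow, hε1, one_pow, mul_one]
  have hn2 : ‖(-2:ℂ)‖ = 2 := by norm_num
  rw [hn2]
  have hj : ‖jV a b P n‖ ≤ |aext a ((n:ℤ)-1) - 1/2| * ‖P ((n:ℤ)-1)‖ + |b n| * ‖P (n:ℤ)‖
      + |a n - 1/2| * ‖P ((n:ℤ)+1)‖ := by
    unfold jV
    refine le_trans (norm_add_le _ _) ?_
    gcongr
    · refine le_trans (norm_add_le _ _) ?_
      gcongr
      · rw [norm_mul, Complex.norm_real, Real.norm_eq_abs]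
      · rw [norm_mul, Complex.norm_real, Real.norm_eq_abs]
    · rw [norm_mul, Complex.norm_real, Real.norm_eq_abs]
  have h1 : (0:ℝ) ≤ |aext a ((n:ℤ)-1) - 1/2| := abs_nonneg _
  have h2 : (0:ℝ) ≤ |b n| := abs_nonneg _
  have h3 : (0:ℝ) ≤ |a n - 1/2| := abs_nonneg _
  have p1 : (0:ℝ) ≤ ‖P ((n:ℤ)-1)‖ := norm_nonneg _
  have p2 : (0:ℝ) ≤ ‖P (n:ℤ)‖ := norm_nonneg _
  have p3 : (0:ℝ) ≤ ‖P ((n:ℤ)+1)‖ := norm_nonneg _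
  nlinarith [mul_nonneg h1 p2, mul_nonneg h1 p3, mul_nonneg h2 p1, mul_nonneg h2 p3,
    mul_nonneg h3 p1, mul_nonneg h3 p2]

end jacobi

set_option maxHeartbeats 4000000 in
theorem edge_asymptotics_resonant
    (a b : ℕ → ℝ) (ha : ∀ n, 0 < a n)
    (hm : Summable (fun n : ℕ => ((n : ℝ) + 1) * (|a n - 1/2| + |b n|)))
    (ε : ℝ) (hε : ε = 1 ∨ ε = -1)
    (P : ℤ → ℂ) (hP : IsJacobiSol a b (ε : ℂ) P) (hPm : P (-1) = 0) (hP0 : P 0 = 1)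
    (hres : (1 : ℂ) - 2 * ∑' n : ℕ, (ε : ℂ) ^ (n + 1) * jV a b P n = 0)
    (γ : ℂ) (hγ : γ = 1 + 2 * ∑' m : ℕ, (ε : ℂ) ^ ((m : ℤ) - 1) * (m : ℂ) * jV a b P m) :
    γ ≠ 0 ∧
    Filter.Tendsto (fun n : ℕ => (ε : ℂ) ^ (n : ℕ) * P (n : ℤ)) Filter.atTop (nhds γ) := by
  -- basic facts about ε
  have hε2 : (ε:ℂ)^2 = 1 := by rcases hε with h | h <;> subst h <;> norm_num
  have hε1 : ‖(ε:ℂ)‖ = 1 := by rcases hε with h | h <;> subst h <;> norm_num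
  have hε0 : (ε:ℂ) ≠ 0 := by rcases hε with h | h <;> subst h <;> norm_num
  obtain ⟨v, hv⟩ : ∃ x : ℕ → ℝ, x = vv a b := ⟨_, rfl⟩
  obtain ⟨q, hq⟩ : ∃ x : ℕ → ℂ, x = qq ε P := ⟨_, rfl⟩
  obtain ⟨c, hc⟩ : ∃ x : ℕ → ℂ, x = cc a b ε P := ⟨_, rfl⟩
  have hvnn : ∀ k, 0 ≤ v k := hv ▸ vv_nonneg a b
  have hwnn : ∀ k, 0 ≤ wt v k := fun k => by
    have := hvnn k; unfold wt; positivity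
  have hSw : Summable (wt v) := hv ▸ summable_wt_vv a b hm
  have hq0 : q 0 = 1 := by
    rw [hq]; unfold qq; norm_num [hP0]
  have hd : ∀ n : ℕ, q (n+1) - q n = 1 + ∑ k ∈ range (n+1), c k := by
    rw [hq, hc]; exact d_formula a b ε P hε2 hP hPm hP0
  have hcb : ∀ n, ‖c n‖ ≤ 2 * v n * (‖P ((n:ℤ)-1)‖ + ‖q n‖ + ‖q (n+1)‖) := by
    rw [hq, hc, hv]; exact norm_cc_le a b ε P hε1
  have hnq : ∀ n, ‖q n‖ = ‖P (n:ℤ)‖ := by rw [hq]; exact norm_qq ε P hε1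
  have hPm1 : ∀ n : ℕ, ‖P (((n+1:ℕ):ℤ)-1)‖ = ‖q n‖ := by
    intro n
    have : ((n+1:ℕ):ℤ)-1 = (n:ℤ) := by push_cast; ring
    rw [this, hnq]
  have hP0n : ‖P (((0:ℕ):ℤ)-1)‖ = 0 := by
    have : ((0:ℕ):ℤ)-1 = -1 := by norm_num
    rw [this, hPm]; simp
  -- linear a priori bound scaffold
  have hlin : ∀ n : ℕ, ‖q n‖ ≤ ((n:ℝ)+1)*(1 + ∑ k ∈ range n, ‖c k‖) := by
    intro n
    induction n with
    | zero => rw [hq0]; simp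
    | succ n ih =>
      have he : q (n+1) = q n + (1 + ∑ k ∈ range (n+1), c k) := by linear_combination hd n
      have h1 : ‖q (n+1)‖ ≤ ‖q n‖ + ‖(1:ℂ) + ∑ k ∈ range (n+1), c k‖ := by
        rw [he]; exact norm_add_le _ _
      have h2 : ‖(1:ℂ) + ∑ k ∈ range (n+1), c k‖ ≤ 1 + ∑ k ∈ range (n+1), ‖c k‖ := by
        refine le_trans (norm_add_le _ _) ?_
        rw [norm_one]
        gcongr
        exact norm_sum_le _ _
      have h3 : ∑ k ∈ range n, ‖c k‖ ≤ ∑ k ∈ range (n+1), ‖c k‖ := by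
        rw [Finset.sum_range_succ]
        have := norm_nonneg (c n)
        linarith
      have h4 : (0:ℝ) ≤ ∑ k ∈ range (n+1), ‖c k‖ := Finset.sum_nonneg fun k _ => norm_nonneg _
      have h5 : (0:ℝ) ≤ (n:ℝ) := Nat.cast_nonneg n
      push_cast
      nlinarith
  -- choice of the cutoff N₁
  obtain ⟨N₁, hN₁1, hN₁⟩ : ∃ N₁ : ℕ, 1 ≤ N₁ ∧ tl (wt v) N₁ ≤ 1/12 := by
    have h1 := tl_tendsto (wt v) hSw
    have h2 : ∀ᶠ n in atTop, tl (wt v) n < 1/12 :=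
      h1.eventually_lt_const (by norm_num)
    obtain ⟨N₀, hN₀⟩ := eventually_atTop.1 h2
    exact ⟨max 1 N₀, le_max_left _ _, le_of_lt (hN₀ _ (le_max_right _ _))⟩
  -- the linear bound
  obtain ⟨K, hKdef⟩ : ∃ x : ℝ, x = 1 + ∑ k ∈ range (N₁+1), ‖c k‖ := ⟨_, rfl⟩
  have hK1 : 1 ≤ K := by
    have : (0:ℝ) ≤ ∑ k ∈ range (N₁+1), ‖c k‖ := Finset.sum_nonneg fun k _ => norm_nonneg _
    rw [hKdef]; linarith
  obtain ⟨M, hMdef⟩ : ∃ x : ℝ, x = 3*K + ∑ j ∈ range (N₁+2), ‖q j‖ := ⟨_, rfl⟩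
  have hM3K : 3*K ≤ M := by
    have : (0:ℝ) ≤ ∑ j ∈ range (N₁+2), ‖q j‖ := Finset.sum_nonneg fun k _ => norm_nonneg _
    rw [hMdef]; linarith
  have hM0 : 0 ≤ M := by linarith
  have hB : ∀ n : ℕ, ‖q n‖ ≤ M*((n:ℝ)+2) := by
    intro n
    induction n using Nat.strong_induction_on with
    | _ n ih =>
    rcases lt_or_ge n (N₁+2) with hn | hn
    · have h1 : ‖q n‖ ≤ ∑ j ∈ range (N₁+2), ‖q j‖ :=
        Finset.single_le_sum (f := fun j => ‖q j‖) (fun k _ => norm_nonneg _)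
          (Finset.mem_range.2 hn)
      rw [hMdef]
      have h2 : (0:ℝ) ≤ (n:ℝ) := Nat.cast_nonneg n
      have h3 : (0:ℝ) ≤ ∑ j ∈ range (N₁+2), ‖q j‖ := Finset.sum_nonneg fun k _ => norm_nonneg _
      nlinarith [hK1]
    · obtain ⟨m, rfl⟩ : ∃ m, n = m + 1 := ⟨n - 1, by omega⟩
      have hm : N₁ + 1 ≤ m := by omega
      obtain ⟨X, hX⟩ : ∃ x : ℝ, x = ‖q (m+1)‖ := ⟨_, rfl⟩
      have hX0 : 0 ≤ X := hX ▸ norm_nonneg _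
      obtain ⟨T, hT⟩ : ∃ x : ℝ, x = tl (wt v) N₁ := ⟨_, rfl⟩
      have hT0 : 0 ≤ T := hT ▸ tl_nonneg _ hwnn _
      have hT12 : T ≤ 1/12 := hT ▸ hN₁
      -- bound the middle terms of the sum
      have hIco : ∀ k ∈ Ico (N₁+1) m, ‖c k‖ ≤ 6*M*(wt v k) := by
        intro k hk
        have hk' := Finset.mem_Ico.1 hk
        obtain ⟨k', rfl⟩ : ∃ k', k = k' + 1 := ⟨k - 1, by omega⟩
        have h1 := hcb (k'+1)
        rw [hPm1 k'] at h1
        have h2 : ‖q k'‖ ≤ M*((k':ℝ)+2) := ih k' (by omega)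
        have h3 : ‖q (k'+1)‖ ≤ M*(((k'+1:ℕ):ℝ)+2) := ih (k'+1) (by omega)
        have h4 : ‖q (k'+2)‖ ≤ M*(((k'+2:ℕ):ℝ)+2) := ih (k'+2) (by omega)
        have h5 := hvnn (k'+1)
        have h6 : (0:ℝ) ≤ (k':ℝ) := Nat.cast_nonneg k'
        unfold wt
        push_cast at *
        nlinarith [mul_nonneg h5 h6, mul_nonneg (mul_nonneg h5 h6) hM0, mul_nonneg h5 hM0]
      -- bound the top term
      have htop : ‖c m‖ ≤ 6*M*(wt v m) + 2*(v m)*X := by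
        obtain ⟨m', rfl⟩ : ∃ m', m = m' + 1 := ⟨m - 1, by omega⟩
        have h1 := hcb (m'+1)
        rw [hPm1 m'] at h1
        have h2 : ‖q m'‖ ≤ M*((m':ℝ)+2) := ih m' (by omega)
        have h3 : ‖q (m'+1)‖ ≤ M*(((m'+1:ℕ):ℝ)+2) := ih (m'+1) (by omega)
        have h5 := hvnn (m'+1)
        have h6 : (0:ℝ) ≤ (m':ℝ) := Nat.cast_nonneg m'
        have h7 : ‖q (m'+1+1)‖ = X := by rw [hX]
        rw [h7] at h1
        unfold wt
        push_cast at *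
        nlinarith [mul_nonneg h5 h6, mul_nonneg (mul_nonneg h5 h6) hM0, mul_nonneg h5 hM0,
          mul_nonneg h5 hX0]
      -- assemble the sum bound
      have hsplit : ∑ k ∈ range (m+1), ‖c k‖
          = ∑ k ∈ range (N₁+1), ‖c k‖ + ∑ k ∈ Ico (N₁+1) (m+1), ‖c k‖ := by
        have := Finset.sum_range_add_sum_Ico (fun k => ‖c k‖) (show N₁+1 ≤ m+1 by omega)
        linarith
      have hIcoAll : ∑ k ∈ Ico (N₁+1) (m+1), ‖c k‖
          ≤ ∑ k ∈ Ico (N₁+1) (m+1), 6*M*(wt v k) + 2*(v m)*X := by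
        rw [Finset.sum_Ico_succ_top hm, Finset.sum_Ico_succ_top hm]
        have h1 : ∑ k ∈ Ico (N₁+1) m, ‖c k‖ ≤ ∑ k ∈ Ico (N₁+1) m, 6*M*(wt v k) :=
          Finset.sum_le_sum hIco
        linarith
      have hwtsum : ∑ k ∈ Ico (N₁+1) (m+1), 6*M*(wt v k) ≤ 6*M*T := by
        rw [← Finset.mul_sum]
        have h1 : ∑ k ∈ Ico (N₁+1) (m+1), wt v k ≤ T :=
          hT ▸ sum_Ico_le_tl (wt v) hwnn hSw N₁ (m+1)
        nlinarith [Finset.sum_nonneg (s := Ico (N₁+1) (m+1)) (f := fun k => wt v k)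
          (fun k _ => hwnn k)]
      have hA : 1 + ∑ k ∈ range (m+1), ‖c k‖ ≤ K + 6*M*T + 2*(v m)*X := by
        rw [hsplit, hKdef]
        linarith
      -- multiply by (m+2)
      have h1 : X ≤ ((m:ℝ)+2) * (1 + ∑ k ∈ range (m+1), ‖c k‖) := by
        have := hlin (m+1)
        rw [← hX] at this
        push_cast at this ⊢
        linarith
      have hm2 : (0:ℝ) ≤ (m:ℝ)+2 := by positivity
      have h2 : X ≤ ((m:ℝ)+2) * (K + 6*M*T + 2*(v m)*X) :=
        le_trans h1 (mul_le_mul_of_nonneg_left hA hm2)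
      -- the three pieces
      have hMT : 6*M*T ≤ M/2 := by nlinarith
      have hvm : ((m:ℝ)+2)*(2*(v m)) ≤ 1/6 := by
        have h5 : wt v m ≤ T := hT ▸ term_le_tl (wt v) hwnn hSw (by omega)
        have h6 := hvnn m
        unfold wt at h5
        nlinarith
      have hvmX : ((m:ℝ)+2)*(2*(v m)*X) ≤ X/6 := by
        have := mul_le_mul_of_nonneg_right hvm hX0
        nlinarith [hvnn m]
      have hK3 : ((m:ℝ)+2)*K ≤ ((m:ℝ)+2)*(M/3) := by
        have : K ≤ M/3 := by linarith
        exact mul_le_mul_of_nonneg_left this hm2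
      have hMT2 : ((m:ℝ)+2)*(6*M*T) ≤ ((m:ℝ)+2)*(M/2) :=
        mul_le_mul_of_nonneg_left hMT hm2
      have hfin : X ≤ ((m:ℝ)+2)*(M/3) + ((m:ℝ)+2)*(M/2) + X/6 := by nlinarith
      rw [← hX]
      push_cast
      nlinarith
  -- summability of c
  have hPkM : ∀ k : ℕ, ‖P ((k:ℤ)-1)‖ ≤ M*((k:ℝ)+1) := by
    intro k
    cases k with
    | zero =>
      rw [hP0n]
      have h0 : ((0:ℕ):ℝ) + 1 = 1 := by norm_num
      rw [h0]
      linarith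
    | succ n =>
      rw [hPm1 n]
      have h1 := hB n
      have h2 : M*((n:ℝ)+2) ≤ M*(((n+1:ℕ):ℝ)+1) := by push_cast; linarith
      linarith
  have hccM : ∀ k : ℕ, ‖c k‖ ≤ 6*M*(wt v k) := by
    intro k
    have h1 := hcb k
    have h2 := hPkM k
    have h3 := hB k
    have h4 : ‖q (k+1)‖ ≤ M*((k:ℝ)+3) := by
      calc ‖q (k+1)‖ ≤ M*(((k+1:ℕ):ℝ)+2) := hB (k+1)
      _ = M*((k:ℝ)+3) := by push_cast; ring
    have h5 := hvnn k
    have h6 : (0:ℝ) ≤ (k:ℝ) := Nat.cast_nonneg k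
    unfold wt
    nlinarith [mul_nonneg h5 h6]
  have hSv : Summable v := summable_base v hvnn hSw
  have hSc : Summable (fun k => ‖c k‖) := by
    apply Summable.of_nonneg_of_le (fun k => norm_nonneg _) hccM (hSw.mul_left (6*M))
  have hScc : Summable c := Summable.of_norm hSc
  -- resonance identity
  have hsum0 : (1:ℂ) + ∑' k, c k = 0 := by
    have : ∑' k, c k = -2 * ∑' n : ℕ, (ε : ℂ) ^ (n + 1) * jV a b P n := by
      rw [← tsum_mul_left]
      apply tsum_congr
      intro n
      rw [hc]; unfold cc; ring
    rw [this]; linear_combination hres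
  -- tails of c
  obtain ⟨tc, htc⟩ : ∃ x : ℕ → ℂ, x = fun j => ∑' i : ℕ, c (j+1+i) := ⟨_, rfl⟩
  have hdt : ∀ n : ℕ, q (n+1) - q n = - tc n := by
    intro n
    rw [hd n]
    have hsplit := Summable.sum_add_tsum_nat_add (f := c) (n+1) hScc
    have : tc n = ∑' i, c (i + (n+1)) := by
      rw [htc]; exact tsum_congr fun i => by congr 1; omega
    rw [this]
    linear_combination hsum0 + hsplit
  have htel : ∀ n : ℕ, N₁ ≤ n → q n = q N₁ - ∑ j ∈ Ico N₁ n, tc j := by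
    intro n hn
    induction n, hn using Nat.le_induction with
    | base => simp
    | succ m hm ih =>
      rw [Finset.sum_Ico_succ_top hm]
      have := hdt m
      rw [ih] at this
      linear_combination this
  -- bound on cc under a uniform hypothesis on the tail of q
  have hcbB : ∀ (B s : ℝ), 0 ≤ B → 0 ≤ s →
      (∀ j, N₁ ≤ j → ‖q j‖ ≤ B + s*((j:ℝ)+2)) →
      ∀ k, N₁ + 1 ≤ k → ‖c k‖ ≤ 6*B*(v k) + 6*s*(wt v k) := by
    intro B s hB0 hs0 Hyp k hk
    obtain ⟨n, rfl⟩ : ∃ n, k = n + 1 := ⟨k - 1, by omega⟩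
    have h1 := hcb (n+1)
    rw [hPm1 n] at h1
    have h2 := Hyp n (by omega)
    have h3 := Hyp (n+1) (by omega)
    have h4 := Hyp (n+2) (by omega)
    have h5 := hvnn (n+1)
    have h6 : (0:ℝ) ≤ (n:ℝ) := Nat.cast_nonneg n
    unfold wt
    push_cast at *
    nlinarith [mul_nonneg h5 h6, mul_nonneg (mul_nonneg h5 h6) hs0, mul_nonneg h5 hs0,
      mul_nonneg h5 hB0]
  -- norm of the complex tails
  have hnormtc : ∀ (B s : ℝ), 0 ≤ B → 0 ≤ s →
      (∀ j, N₁ ≤ j → ‖q j‖ ≤ B + s*((j:ℝ)+2)) →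
      ∀ j, N₁ ≤ j → ‖tc j‖ ≤ 6*B*(tl v j) + 6*s*(tl (wt v) j) := by
    intro B s hB0 hs0 Hyp j hj
    have hsn : Summable (fun i => ‖c (j+1+i)‖) := summable_shift (fun k => ‖c k‖) hSc (j+1)
    have h1 : ‖tc j‖ ≤ ∑' i : ℕ, ‖c (j+1+i)‖ := by
      rw [htc]; exact norm_tsum_le_tsum_norm hsn
    have hs2a : Summable (fun i => 6*B*(v (j+1+i))) := (summable_shift v hSv (j+1)).mul_left (6*B)
    have hs2b : Summable (fun i => 6*s*(wt v (j+1+i))) :=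
      (summable_shift (wt v) hSw (j+1)).mul_left (6*s)
    have h3 : ∑' i : ℕ, ‖c (j+1+i)‖ ≤ ∑' i : ℕ, (6*B*(v (j+1+i)) + 6*s*(wt v (j+1+i))) := by
      refine Summable.tsum_le_tsum ?_ hsn (hs2a.add hs2b)
      intro i
      exact hcbB B s hB0 hs0 Hyp (j+1+i) (by omega)
    have h4 : ∑' i : ℕ, (6*B*(v (j+1+i)) + 6*s*(wt v (j+1+i)))
        = 6*B*(tl v j) + 6*s*(tl (wt v) j) := by
      rw [Summable.tsum_add hs2a hs2b, tsum_mul_left, tsum_mul_left]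
      rfl
    linarith
  -- the contraction improvement step
  have hiter : ∀ (B s : ℝ), 0 ≤ B → 0 ≤ s →
      (∀ j, N₁ ≤ j → ‖q j‖ ≤ B + s*((j:ℝ)+2)) →
      (∀ j, N₁ ≤ j → ‖q j‖ ≤ (‖q N₁‖ + B/2) + (s/2)*((j:ℝ)+2)) := by
    intro B s hB0 hs0 Hyp j hj
    have hj2 : (0:ℝ) ≤ (j:ℝ)+2 := by positivity
    rcases eq_or_lt_of_le hj with rfl | hlt
    · nlinarith [mul_nonneg hs0 hj2]
    · have htelj := htel j (le_of_lt hlt)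
      have h1 : ‖q j‖ ≤ ‖q N₁‖ + ∑ j' ∈ Ico N₁ j, ‖tc j'‖ := by
        rw [htelj]
        refine le_trans (norm_sub_le _ _) ?_
        gcongr
        exact norm_sum_le _ _
      have h2 : ∑ j' ∈ Ico N₁ j, ‖tc j'‖
          ≤ ∑ j' ∈ Ico N₁ j, (6*B*(tl v j') + 6*s*(tl (wt v) j')) := by
        refine Finset.sum_le_sum ?_
        intro j' hj'
        exact hnormtc B s hB0 hs0 Hyp j' (Finset.mem_Ico.1 hj').1
      have h3 : ∑ j' ∈ Ico N₁ j, (6*B*(tl v j') + 6*s*(tl (wt v) j'))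
          = 6*B*(∑ j' ∈ Ico N₁ j, tl v j') + 6*s*(∑ j' ∈ Ico N₁ j, tl (wt v) j') := by
        rw [Finset.sum_add_distrib, Finset.mul_sum, Finset.mul_sum]
      have h4 : ∑ j' ∈ Ico N₁ j, tl v j' ≤ 1/12 :=
        le_trans (sum_tl_le v hvnn hSw N₁ j (le_of_lt hlt)) hN₁
      have h5 : ∑ j' ∈ Ico N₁ j, tl (wt v) j' ≤ ((j:ℝ)+2) * (1/12) := by
        have hcard : ∑ j' ∈ Ico N₁ j, tl (wt v) j' ≤ (Ico N₁ j).card • tl (wt v) N₁ := by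
          refine Finset.sum_le_card_nsmul _ _ _ ?_
          intro j' hj'
          exact tl_anti (wt v) hwnn hSw (Finset.mem_Ico.1 hj').1
        rw [Nat.card_Ico, nsmul_eq_mul] at hcard
        have hc2 : ((j - N₁ : ℕ):ℝ) ≤ (j:ℝ)+2 := by
          have : (j - N₁ : ℕ) ≤ j := Nat.sub_le _ _
          have := (Nat.cast_le (α := ℝ)).2 this
          linarith
        have htl0 : 0 ≤ tl (wt v) N₁ := tl_nonneg _ hwnn _
        nlinarith
      have hB12 : 6*B*(∑ j' ∈ Ico N₁ j, tl v j') ≤ B/2 := by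
        have h0 : 0 ≤ ∑ j' ∈ Ico N₁ j, tl v j' :=
          Finset.sum_nonneg fun j' _ => tl_nonneg _ hvnn _
        have h6 := mul_le_mul_of_nonneg_left h4 hB0
        linarith
      have hs12 : 6*s*(∑ j' ∈ Ico N₁ j, tl (wt v) j') ≤ (s/2)*((j:ℝ)+2) := by
        have h0 : 0 ≤ ∑ j' ∈ Ico N₁ j, tl (wt v) j' :=
          Finset.sum_nonneg fun j' _ => tl_nonneg _ hwnn _
        have h6 := mul_le_mul_of_nonneg_left h5 hs0
        linarith
      linarith
  -- boundedness of q
  have hiter2 : ∀ i : ℕ, ∀ j, N₁ ≤ j → ‖q j‖ ≤ 2*‖q N₁‖ + (M/2^i)*((j:ℝ)+2) := by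
    intro i
    induction i with
    | zero =>
      intro j hj
      have := hB j
      have : ‖q j‖ ≤ M*((j:ℝ)+2) := this
      have hA : 0 ≤ ‖q N₁‖ := norm_nonneg _
      have : M/2^0 = M := by norm_num
      rw [this]
      linarith [hB j]
    | succ i ih =>
      have h0 : (0:ℝ) ≤ 2*‖q N₁‖ := by positivity
      have h1 : (0:ℝ) ≤ M/2^i := by positivity
      have h2 := hiter (2*‖q N₁‖) (M/2^i) h0 h1 ih
      intro j hj
      have h3 := h2 j hj
      have he : M/2^(i+1) = (M/2^i)/2 := by
        rw [pow_succ]; ring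
      rw [he]
      linarith
  have hbdd1 : ∀ j, N₁ ≤ j → ‖q j‖ ≤ 2*‖q N₁‖ := by
    intro j hj
    have hlim : Tendsto (fun i : ℕ => 2*‖q N₁‖ + (M/2^i)*((j:ℝ)+2)) atTop
        (nhds (2*‖q N₁‖)) := by
      have h1 : Tendsto (fun i : ℕ => (1/2:ℝ)^i) atTop (nhds 0) := by
        apply tendsto_pow_atTop_nhds_zero_of_lt_one <;> norm_num
      have h2 : Tendsto (fun i : ℕ => 2*‖q N₁‖ + (M*(1/2:ℝ)^i)*((j:ℝ)+2)) atTop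
          (nhds (2*‖q N₁‖ + (M*0)*((j:ℝ)+2))) := by
        exact tendsto_const_nhds.add (((h1.const_mul M).mul_const _))
      simp only [mul_zero, zero_mul, add_zero] at h2
      apply h2.congr
      intro i
      congr 2
      rw [one_div, inv_pow, ← div_eq_mul_inv]
    exact ge_of_tendsto hlim (Filter.Eventually.of_forall fun i => hiter2 i j hj)
  obtain ⟨Bq, hBqdef⟩ : ∃ x : ℝ, x = 2*‖q N₁‖ + ∑ j ∈ range (N₁+1), ‖q j‖ := ⟨_, rfl⟩
  have hBq0 : 0 ≤ Bq := by
    have : (0:ℝ) ≤ ∑ j ∈ range (N₁+1), ‖q j‖ := Finset.sum_nonneg fun k _ => norm_nonneg _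
    have := norm_nonneg (q N₁)
    rw [hBqdef]; linarith
  have hbdd : ∀ j, ‖q j‖ ≤ Bq := by
    intro j
    rcases le_or_gt N₁ j with h | h
    · have := hbdd1 j h
      have h2 : (0:ℝ) ≤ ∑ j ∈ range (N₁+1), ‖q j‖ := Finset.sum_nonneg fun k _ => norm_nonneg _
      rw [hBqdef]; linarith
    · have h1 : ‖q j‖ ≤ ∑ j ∈ range (N₁+1), ‖q j‖ :=
        Finset.single_le_sum (f := fun j => ‖q j‖) (fun k _ => norm_nonneg _)
          (Finset.mem_range.2 (by omega))
      have := norm_nonneg (q N₁)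
      rw [hBqdef]; linarith
  -- now c has summable first moment
  have hPkB : ∀ k : ℕ, ‖P ((k:ℤ)-1)‖ ≤ Bq := by
    intro k
    cases k with
    | zero => rw [hP0n]; exact hBq0
    | succ n => rw [hPm1 n]; exact hbdd n
  have hccB : ∀ k : ℕ, ‖c k‖ ≤ 6*Bq*(v k) := by
    intro k
    have h1 := hcb k
    have h2 := hPkB k
    have h3 := hbdd k
    have h4 := hbdd (k+1)
    have h5 := hvnn k
    nlinarith
  have hSwc : Summable (wt (fun k => ‖c k‖)) := by
    have hg : Summable (fun k : ℕ => 6*Bq*(wt v k)) := hSw.mul_left (6*Bq)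
    refine Summable.of_nonneg_of_le (fun k => ?_) (fun k => ?_) hg
    · show (0:ℝ) ≤ ((k:ℝ)+4) * ‖c k‖
      positivity
    · show ((k:ℝ)+4) * ‖c k‖ ≤ 6*Bq*(wt v k)
      unfold wt
      have h1 := hccB k
      have h2 : (0:ℝ) ≤ (k:ℝ)+4 := by positivity
      have h3 : ((k:ℝ)+4) * ‖c k‖ ≤ ((k:ℝ)+4) * (6*Bq*(v k)) :=
        mul_le_mul_of_nonneg_left h1 h2
      have h4 : ((k:ℝ)+4) * (6*Bq*(v k)) = 6*Bq*(((k:ℝ)+4) * v k) := by ring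
      linarith
  -- the weighted tail function
  obtain ⟨tw, htw⟩ : ∃ x : ℕ → ℂ, x = fun n => ∑' i : ℕ, ((i:ℂ)+1) * c (n+1+i) := ⟨_, rfl⟩
  have hnormshift : ∀ n : ℕ, Summable (fun i : ℕ => ((i:ℝ)+1) * ‖c (n+1+i)‖) := fun n =>
    summable_wshift (fun k => ‖c k‖) (fun k => norm_nonneg _) hSwc n
  have hnormeq : ∀ n i : ℕ, ‖((i:ℂ)+1) * c (n+1+i)‖ = ((i:ℝ)+1) * ‖c (n+1+i)‖ := by
    intro n i
    rw [norm_mul]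
    congr 1
    have h1 : ((i:ℂ)+1) = ((i+1:ℕ):ℂ) := by push_cast; ring
    rw [h1, Complex.norm_natCast]
    push_cast; ring
  have hStwnorm : ∀ n : ℕ, Summable (fun i : ℕ => ‖((i:ℂ)+1) * c (n+1+i)‖) := by
    intro n
    exact (hnormshift n).congr (fun i => (hnormeq n i).symm)
  have hStw : ∀ n : ℕ, Summable (fun i : ℕ => ((i:ℂ)+1) * c (n+1+i)) := fun n =>
    Summable.of_norm (hStwnorm n)
  have hShiftc : ∀ n : ℕ, Summable (fun i : ℕ => c (n+1+i)) := by
    intro n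
    have := (summable_nat_add_iff (f := c) (n+1)).2 hScc
    exact this.congr (fun i => by rw [add_comm])
  have hSic : ∀ n : ℕ, Summable (fun i : ℕ => (i:ℂ) * c (n+1+i)) := by
    intro n
    have := (hStw n).sub (hShiftc n)
    apply this.congr
    intro i
    ring
  have htwsucc : ∀ n : ℕ, tw n = tc n + tw (n+1) := by
    intro n
    rw [htw, htc]
    show ∑' i : ℕ, ((i:ℂ)+1) * c (n+1+i)
        = (∑' i : ℕ, c (n+1+i)) + ∑' i : ℕ, ((i:ℂ)+1) * c (n+1+1+i)
    have h1 : (fun i : ℕ => ((i:ℂ)+1) * c (n+1+i))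
        = fun i : ℕ => c (n+1+i) + (i:ℂ) * c (n+1+i) := by
      funext i; ring
    rw [h1, Summable.tsum_add (hShiftc n) (hSic n)]
    congr 1
    rw [Summable.tsum_eq_zero_add (hSic n)]
    simp only [Nat.cast_zero, zero_mul, zero_add]
    apply tsum_congr
    intro i
    have h2 : n+1+(i+1) = n+1+1+i := by omega
    rw [h2]
    push_cast
    ring
  obtain ⟨γ', hγ'def⟩ : ∃ x : ℂ, x = 1 - ∑' k : ℕ, (k:ℂ) * c k := ⟨_, rfl⟩
  have hSkc : Summable (fun k : ℕ => (k:ℂ) * c k) := by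
    apply Summable.of_norm
    refine Summable.of_nonneg_of_le (fun k => norm_nonneg _) (fun k => ?_) hSwc
    rw [norm_mul, Complex.norm_natCast]
    have h1 := norm_nonneg (c k)
    have h2 : (0:ℝ) ≤ (k:ℝ) := Nat.cast_nonneg k
    unfold wt
    nlinarith
  have htw0eq : ∑' k : ℕ, (k:ℂ) * c k = tw 0 := by
    rw [htw]
    rw [Summable.tsum_eq_zero_add hSkc]
    simp only [Nat.cast_zero, zero_mul, zero_add]
    apply tsum_congr
    intro i
    have h2 : i+1 = 0+1+i := by omega
    rw [h2]
    push_cast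
    ring
  have hγ' : ∀ n : ℕ, q n = γ' + tw n := by
    intro n
    induction n with
    | zero =>
      rw [hq0, hγ'def, ← htw0eq]
      ring
    | succ n ih =>
      have h1 := hdt n
      have h2 := htwsucc n
      linear_combination h1 + ih + h2
  have htwbound : ∀ n : ℕ, ‖tw n‖ ≤ tl (wt (fun k => ‖c k‖)) n := by
    intro n
    have h1 : ‖tw n‖ ≤ ∑' i : ℕ, ‖((i:ℂ)+1) * c (n+1+i)‖ := by
      rw [htw]; exact norm_tsum_le_tsum_norm (hStwnorm n)
    have h2 : ∑' i : ℕ, ‖((i:ℂ)+1) * c (n+1+i)‖ = ∑' i : ℕ, ((i:ℝ)+1) * ‖c (n+1+i)‖ :=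
      tsum_congr (hnormeq n)
    have h3 : wtl (fun k => ‖c k‖) n ≤ tl (wt (fun k => ‖c k‖)) n :=
      wtl_le_tl (fun k => ‖c k‖) (fun k => norm_nonneg _) hSwc n
    have h4 : wtl (fun k => ‖c k‖) n = ∑' i : ℕ, ((i:ℝ)+1) * ‖c (n+1+i)‖ := rfl
    linarith
  have htw0 : Tendsto tw atTop (nhds 0) := by
    apply squeeze_zero_norm htwbound
    exact tl_tendsto _ hSwc
  have htendq : Tendsto q atTop (nhds γ') := by
    have h1 : Tendsto (fun n => γ' + tw n) atTop (nhds (γ' + 0)) :=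
      tendsto_const_nhds.add htw0
    rw [add_zero] at h1
    exact h1.congr (fun n => (hγ' n).symm)
  have hγγ' : γ = γ' := by
    have key : ∀ m : ℕ, (ε : ℂ) ^ ((m : ℤ) - 1) * (m : ℂ) * jV a b P m
        = (-(1/2) : ℂ) * ((m:ℂ) * c m) := by
      intro m
      have hz : (ε:ℂ)^((m:ℤ)-1) = (ε:ℂ)^(m+1) := by
        rcases hε with h | h <;> subst h
        · push_cast
          rw [one_zpow, one_pow]
        · push_cast
          rw [show ((m:ℤ)-1) = (m:ℤ)+1-2 by ring,
            zpow_sub₀ (by norm_num : (-1:ℂ) ≠ 0)]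
          norm_num
          rw [show ((m:ℤ)+1) = ((m+1:ℕ):ℤ) by push_cast; ring, zpow_natCast]
      rw [hz, hc]
      show (ε:ℂ)^(m+1) * (m:ℂ) * jV a b P m = (-(1/2) : ℂ) * ((m:ℂ) * cc a b ε P m)
      unfold cc
      ring
    rw [hγ, hγ'def]
    rw [tsum_congr key, tsum_mul_left]
    ring
  -- nonvanishing of γ
  have hγne : γ ≠ 0 := by
    intro h0
    have hγ'0 : γ' = 0 := by rw [← hγγ']; exact h0
    have hqt : ∀ n, q n = tw n := by
      intro n
      have := hγ' n
      rw [hγ'0, zero_add] at this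
      exact this
    -- halving step
    have hhalf : ∀ t : ℝ, 0 ≤ t → (∀ l, N₁ ≤ l → ‖q l‖ ≤ t) →
        ∀ l, N₁ ≤ l → ‖q l‖ ≤ t/2 := by
      intro t ht Hyp l hl
      have h1 : ‖q l‖ ≤ ∑' i : ℕ, ((i:ℝ)+1) * ‖c (l+1+i)‖ := by
        rw [hqt l, htw]
        refine le_trans (norm_tsum_le_tsum_norm (hStwnorm l)) (le_of_eq ?_)
        exact tsum_congr (hnormeq l)
      have h2 : ∀ i : ℕ, ((i:ℝ)+1) * ‖c (l+1+i)‖ ≤ 6*t*(wt v (l+1+i)) := by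
        intro i
        have hcl := hcb (l+1+i)
        have hre : l+1+i = (l+i)+1 := by omega
        rw [hre] at hcl ⊢
        rw [hPm1 (l+i)] at hcl
        have e1 : ‖q (l+i)‖ ≤ t := Hyp (l+i) (by omega)
        have e2 : ‖q (l+i+1)‖ ≤ t := Hyp (l+i+1) (by omega)
        have e3 : ‖q (l+i+1+1)‖ ≤ t := Hyp (l+i+1+1) (by omega)
        have h5 := hvnn (l+i+1)
        have h6 : ((i:ℝ)+1) ≤ ((l+i+1:ℕ):ℝ)+4 := by push_cast; nlinarith [Nat.cast_nonneg (α := ℝ) l]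
        have h7 : (0:ℝ) ≤ ((i:ℝ)+1) := by positivity
        have h8 : ‖c (l+i+1)‖ ≤ 6*(v (l+i+1))*t := by nlinarith [norm_nonneg (c (l+i+1))]
        have h9 : (0:ℝ) ≤ ‖c (l+i+1)‖ := norm_nonneg _
        unfold wt
        nlinarith [mul_nonneg h5 ht]
      have h3 : ∑' i : ℕ, ((i:ℝ)+1) * ‖c (l+1+i)‖ ≤ ∑' i : ℕ, 6*t*(wt v (l+1+i)) := by
        refine Summable.tsum_le_tsum h2 (hnormshift l) ?_
        exact (summable_shift (wt v) hSw (l+1)).mul_left (6*t)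
      have h4 : ∑' i : ℕ, 6*t*(wt v (l+1+i)) = 6*t*(tl (wt v) l) := by
        rw [tsum_mul_left]; rfl
      have h5 : tl (wt v) l ≤ 1/12 :=
        le_trans (tl_anti (wt v) hwnn hSw hl) hN₁
      have h6 : 6*t*(tl (wt v) l) ≤ t/2 := by nlinarith [tl_nonneg (wt v) hwnn l]
      linarith
    -- iterate the halving
    have hit : ∀ i : ℕ, ∀ l, N₁ ≤ l → ‖q l‖ ≤ Bq/2^i := by
      intro i
      induction i with
      | zero =>
        intro l hl
        have h : Bq/2^0 = Bq := by norm_num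
        rw [h]
        exact hbdd l
      | succ i ih =>
        have h1 : (0:ℝ) ≤ Bq/2^i := by positivity
        have h2 := hhalf (Bq/2^i) h1 ih
        intro l hl
        have h3 := h2 l hl
        have h4 : Bq/2^(i+1) = (Bq/2^i)/2 := by rw [pow_succ]; ring
        rw [h4]
        exact h3
    have hqzero : ∀ l, N₁ ≤ l → q l = 0 := by
      intro l hl
      have hle : ‖q l‖ ≤ 0 := by
        have hlim : Tendsto (fun i : ℕ => Bq/2^i) atTop (nhds 0) := by
          have h1 : Tendsto (fun i : ℕ => (1/2:ℝ)^i) atTop (nhds 0) := by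
            apply tendsto_pow_atTop_nhds_zero_of_lt_one <;> norm_num
          have h2 := h1.const_mul Bq
          rw [mul_zero] at h2
          apply h2.congr
          intro i
          rw [one_div, inv_pow, ← div_eq_mul_inv]
        exact ge_of_tendsto hlim (Filter.Eventually.of_forall fun i => hit i l hl)
      exact norm_eq_zero.1 (le_antisymm hle (norm_nonneg _))
    have hPzero : ∀ l : ℕ, N₁ ≤ l → P (l:ℤ) = 0 := by
      intro l hl
      have h1 := hqzero l hl
      rw [hq] at h1
      unfold qq at h1
      rcases mul_eq_zero.1 h1 with h | h
      · exact absurd h (pow_ne_zero _ hε0)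
      · exact h
    have down : ∀ i : ℕ, ∀ l : ℕ, N₁ - i ≤ l → P (l:ℤ) = 0 := by
      intro i
      induction i with
      | zero => intro l hl; exact hPzero l (by omega)
      | succ i ih =>
        intro l hl
        rcases le_or_gt (N₁ - i) l with h | h
        · exact ih l h
        · have e1 : P ((l+1:ℕ):ℤ) = 0 := ih (l+1) (by omega)
          have e2 : P ((l+2:ℕ):ℤ) = 0 := ih (l+2) (by omega)
          have hj := hP (l+1)
          have hidx1 : ((l+1:ℕ):ℤ) - 1 = ((l:ℕ):ℤ) := by push_cast; ring
          have hidx2 : ((l+1:ℕ):ℤ) + 1 = ((l+2:ℕ):ℤ) := by push_cast; ring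
          rw [hidx1, hidx2, e1, e2] at hj
          have haext : aext a ((l:ℕ):ℤ) = a l := by unfold aext; simp
          rw [haext] at hj
          simp only [mul_zero, add_zero, zero_add] at hj
          rcases mul_eq_zero.1 hj with h' | h'
          · exact absurd h' (Complex.ofReal_ne_zero.2 (ne_of_gt (ha l)))
          · exact h'
    have hfin := down N₁ 0 (by omega)
    rw [show ((0:ℕ):ℤ) = 0 by norm_num] at hfin
    rw [hP0] at hfin
    exact one_ne_zero hfin
  refine ⟨hγne, ?_⟩
  have hfq : (fun n : ℕ => (ε : ℂ) ^ (n : ℕ) * P (n : ℤ)) = q := by rw [hq]; rfl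
  rw [hγγ', hfq]
  exact htendq
end
end
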